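/- arXiv:2605.16900 — 11 statements merged into one kernel-verified Lean document; each statement's English description precedes it below -/
import Mathlib

section
/- Let h > 0, m ∈ ℝ, and let F : ℝ → ℝ be six times continuously differentiable with |F⁽⁶⁾(z)| ≤ M for all z ∈ ℝ. If ξ is distributed according to N(0,h), then |E[F(m + ξ)] − F(m) − (h/2)·F''(m) − (h²/8)·F⁽⁴⁾(m)| ≤ (M/48)·h³. -/
open MeasureTheory ProbabilityTheory Real Filter Asymptotics intervalIntegral
open scoped ENNReal NNReal


lemma my_taylor_bound (M : ℝ) :
    ∀ (n : ℕ) (F : ℝ → ℝ), ContDiff ℝ n F → (∀ t, |iteratedDeriv n F t| ≤ M) →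
    ∀ x z : ℝ, |F (x + z) - ∑ k ∈ Finset.range n, iteratedDeriv k F x / k.factorial * z ^ k|
      ≤ M * |z| ^ n / n.factorial := by
  intro n
  induction n with
  | zero =>
    intro F _ hb x z
    simpa using hb (x + z)
  | succ n IH =>
    intro F hF hb x z
    have hM : (0:ℝ) ≤ M := le_trans (abs_nonneg _) (hb 0)
    have hF' : ContDiff ℝ (n+1 : ℕ) F := hF
    have hF2 : ContDiff ℝ ((n : WithTop ℕ∞) + 1) F := by exact_mod_cast hF
    have hFd : Differentiable ℝ F := (contDiff_succ_iff_deriv.mp hF2).1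
    have hG : ContDiff ℝ n (deriv F) := (contDiff_succ_iff_deriv.mp hF2).2.2
    have hGb : ∀ t, |iteratedDeriv n (deriv F) t| ≤ M := by
      intro t
      rw [← iteratedDeriv_succ']
      exact hb t
    have key := IH (deriv F) hG hGb x
    set φ : ℝ → ℝ := fun z =>
      F (x + z) - ∑ k ∈ Finset.range (n+1), iteratedDeriv k F x / k.factorial * z ^ k with hφ
    set ψ : ℝ → ℝ := fun z =>
      deriv F (x + z) - ∑ k ∈ Finset.range n, iteratedDeriv k (deriv F) x / k.factorial * z ^ k
      with hψ
    have hφ0 : φ 0 = 0 := by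
      simp only [hφ]
      rw [Finset.sum_eq_single 0]
      · simp
      · intro k _ hk
        simp [zero_pow hk]
      · simp
    have hderiv : ∀ t, HasDerivAt φ (ψ t) t := by
      intro t
      have h1 : HasDerivAt (fun z => F (x + z)) (deriv F (x + t) * 1) t :=
        HasDerivAt.comp t ((hFd (x + t)).hasDerivAt) ((hasDerivAt_id t).const_add x)
      have h2 : HasDerivAt (fun z : ℝ => ∑ k ∈ Finset.range (n+1),
          iteratedDeriv k F x / k.factorial * z ^ k)
          (∑ k ∈ Finset.range (n+1),
            iteratedDeriv k F x / k.factorial * (k * t ^ (k-1))) t := by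
        apply HasDerivAt.fun_sum
        intro k _
        exact (hasDerivAt_pow k t).const_mul _
      have hsum : ∑ k ∈ Finset.range (n+1),
          iteratedDeriv k F x / k.factorial * (k * t ^ (k-1))
          = ∑ k ∈ Finset.range n, iteratedDeriv k (deriv F) x / k.factorial * t ^ k := by
        rw [Finset.sum_range_succ']
        simp only [Nat.cast_zero, zero_mul, mul_zero, add_zero, Nat.cast_add, Nat.cast_one,
          Nat.add_sub_cancel]
        apply Finset.sum_congr rfl
        intro k _
        have hid : iteratedDeriv (k+1) F x = iteratedDeriv k (deriv F) x := by
          rw [iteratedDeriv_succ']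
        rw [hid, Nat.factorial_succ]
        have hkf : (k.factorial : ℝ) ≠ 0 := by exact_mod_cast k.factorial_ne_zero
        push_cast
        field_simp
      have := h1.sub h2
      rw [mul_one] at this
      rw [hsum] at this
      exact this
    have hψcont : Continuous ψ := by
      apply Continuous.sub
      · exact hG.continuous.comp (continuous_const.add continuous_id)
      · exact continuous_finset_sum _ fun k _ => continuous_const.mul (continuous_pow k)
    have habs : ∀ t, |ψ t| ≤ M * |t| ^ n / n.factorial := fun t => key t
    have hnf : (0:ℝ) < n.factorial := by exact_mod_cast n.factorial_pos
    have hfact : ((n+1).factorial : ℝ) = (n+1) * n.factorial := by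
      rw [Nat.factorial_succ]; push_cast; ring
    rcases le_or_gt 0 z with hz | hz
    · have hftc : ∫ t in (0:ℝ)..z, ψ t = φ z - φ 0 :=
        intervalIntegral.integral_eq_sub_of_hasDerivAt (fun t _ => hderiv t)
          (hψcont.intervalIntegrable 0 z)
      rw [hφ0, sub_zero] at hftc
      have h1 : |φ z| ≤ ∫ t in (0:ℝ)..z, |ψ t| := by
        rw [← hftc]
        simpa using intervalIntegral.norm_integral_le_integral_norm (μ := volume) (f := ψ) hz
      have h2 : ∫ t in (0:ℝ)..z, |ψ t| ≤ ∫ t in (0:ℝ)..z, M / n.factorial * t ^ n := by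
        apply intervalIntegral.integral_mono_on hz
        · exact (hψcont.abs).intervalIntegrable 0 z
        · exact ((continuous_const.mul (continuous_pow n)).intervalIntegrable 0 z)
        · intro t ht
          have := habs t
          rw [abs_of_nonneg ht.1] at this
          calc |ψ t| ≤ M * t ^ n / n.factorial := this
            _ = M / n.factorial * t ^ n := by ring
      have h3 : ∫ t in (0:ℝ)..z, M / n.factorial * t ^ n
          = M * |z| ^ (n+1) / (n+1).factorial := by
        rw [intervalIntegral.integral_const_mul, integral_pow, abs_of_nonneg hz, hfact,
          zero_pow n.succ_ne_zero, sub_zero, div_mul_div_comm,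
          mul_comm ((n.factorial : ℝ)) ((n : ℝ) + 1)]
      calc |φ z| ≤ _ := h1
        _ ≤ _ := h2
        _ = _ := h3
    · have hftc : ∫ t in z..(0:ℝ), ψ t = φ 0 - φ z :=
        intervalIntegral.integral_eq_sub_of_hasDerivAt (fun t _ => hderiv t)
          (hψcont.intervalIntegrable z 0)
      have h1 : |φ z| ≤ ∫ t in z..(0:ℝ), |ψ t| := by
        rw [hφ0, zero_sub] at hftc
        rw [← abs_neg, ← hftc]
        simpa using intervalIntegral.norm_integral_le_integral_norm (μ := volume) (f := ψ) hz.le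
      have h2 : ∫ t in z..(0:ℝ), |ψ t| ≤ ∫ t in z..(0:ℝ), M / n.factorial * (-t) ^ n := by
        apply intervalIntegral.integral_mono_on hz.le
        · exact (hψcont.abs).intervalIntegrable z 0
        · exact ((continuous_const.mul ((continuous_neg).pow n)).intervalIntegrable z 0)
        · intro t ht
          have := habs t
          rw [abs_of_nonpos ht.2] at this
          calc |ψ t| ≤ M * (-t) ^ n / n.factorial := this
            _ = M / n.factorial * (-t) ^ n := by ring
      have h3 : ∫ t in z..(0:ℝ), M / n.factorial * (-t) ^ n
          = M * |z| ^ (n+1) / (n+1).factorial := by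
        rw [intervalIntegral.integral_const_mul,
          intervalIntegral.integral_comp_neg (fun u => u ^ n), neg_zero, integral_pow,
          abs_of_neg hz, hfact, zero_pow n.succ_ne_zero, sub_zero, div_mul_div_comm,
          mul_comm ((n.factorial : ℝ)) ((n : ℝ) + 1)]
      calc |φ z| ≤ _ := h1
        _ ≤ _ := h2
        _ = _ := h3


lemma my_integrable_pow_gauss {b : ℝ} (hb : 0 < b) (n : ℕ) :
    Integrable fun x : ℝ => x ^ n * rexp (-b * x ^ 2) := by
  have hs : (-1 : ℝ) < (n : ℝ) := by
    have : (0:ℝ) ≤ n := Nat.cast_nonneg n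
    linarith
  simpa [Real.rpow_natCast] using integrable_rpow_mul_exp_neg_mul_sq hb hs

lemma my_tendsto_pow_gauss_atTop {b : ℝ} (hb : 0 < b) (n : ℕ) :
    Tendsto (fun x : ℝ => x ^ n * rexp (-b * x ^ 2)) atTop (nhds 0) := by
  have h1 : (fun x : ℝ => x ^ (n:ℝ) * rexp (-b * x ^ 2)) =o[atTop]
      fun x : ℝ => rexp (-(1/2) * x) := rpow_mul_exp_neg_mul_sq_isLittleO_exp_neg hb n
  have h3 : Tendsto (fun x : ℝ => (1/2 : ℝ) * x) atTop atTop :=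
    Tendsto.const_mul_atTop (by norm_num) tendsto_id
  have h2 : Tendsto (fun x : ℝ => rexp (-(1/2) * x)) atTop (nhds 0) := by
    have := Real.tendsto_exp_neg_atTop_nhds_zero.comp h3
    simpa [Function.comp_def, neg_mul] using this
  have := h1.isBigO.trans_tendsto h2
  simpa [Real.rpow_natCast] using this

lemma my_tendsto_pow_gauss_atBot {b : ℝ} (hb : 0 < b) (n : ℕ) :
    Tendsto (fun x : ℝ => x ^ n * rexp (-b * x ^ 2)) atBot (nhds 0) := by
  have h1 : Tendsto (fun x : ℝ => (-1 : ℝ) ^ n * (x ^ n * rexp (-b * x ^ 2))) atTop (nhds 0) := by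
    simpa using (my_tendsto_pow_gauss_atTop hb n).const_mul ((-1 : ℝ) ^ n)
  have h2 := h1.comp tendsto_neg_atBot_atTop
  refine Tendsto.congr (fun x => ?_) h2
  show (-1:ℝ) ^ n * ((-x) ^ n * rexp (-b * (-x) ^ 2)) = x ^ n * rexp (-b * x ^ 2)
  have hx : ((-x) : ℝ) ^ n = (-1:ℝ) ^ n * x ^ n := by rw [neg_pow]
  rw [neg_sq, hx, ← mul_assoc, ← mul_assoc, ← mul_pow]
  norm_num

lemma my_gauss_moment_rec {b : ℝ} (hb : 0 < b) (n : ℕ) :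
    ∫ x : ℝ, x ^ (n + 2) * rexp (-b * x ^ 2)
      = ((n + 1) / (2 * b)) * ∫ x : ℝ, x ^ n * rexp (-b * x ^ 2) := by
  set g : ℝ → ℝ := fun x => x ^ (n + 1) * rexp (-b * x ^ 2) with hg
  set g' : ℝ → ℝ := fun x =>
    (n + 1) * (x ^ n * rexp (-b * x ^ 2)) - 2 * b * (x ^ (n + 2) * rexp (-b * x ^ 2)) with hg'
  have hderiv : ∀ x : ℝ, HasDerivAt g (g' x) x := by
    intro x
    have hexp : HasDerivAt (fun x : ℝ => rexp (-b * x ^ 2))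
        (rexp (-b * x ^ 2) * (-b * (2 * x))) x := by
      have : HasDerivAt (fun x : ℝ => -b * x ^ 2) (-b * (2 * x)) x := by
        simpa using (hasDerivAt_pow 2 x).const_mul (-b)
      exact this.exp
    have := (hasDerivAt_pow (n + 1) x).fun_mul hexp
    replace this : HasDerivAt g _ x := this
    convert this using 1
    show (n + 1 : ℝ) * (x ^ n * rexp (-b * x ^ 2)) - 2 * b * (x ^ (n + 2) * rexp (-b * x ^ 2)) = _
    push_cast
    ring
  have hint : ∀ k : ℕ, Integrable fun x : ℝ => x ^ k * rexp (-b * x ^ 2) :=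
    fun k => my_integrable_pow_gauss hb k
  have hg'int : Integrable g' := ((hint n).const_mul _).sub ((hint (n + 2)).const_mul _)
  have htop : Tendsto g atTop (nhds 0) := my_tendsto_pow_gauss_atTop hb (n + 1)
  have hbot : Tendsto g atBot (nhds 0) := my_tendsto_pow_gauss_atBot hb (n + 1)
  have hIoi : ∫ x in Set.Ioi (0:ℝ), g' x = 0 - g 0 :=
    integral_Ioi_of_hasDerivAt_of_tendsto (hderiv 0).continuousAt.continuousWithinAt
      (fun x _ => hderiv x) hg'int.integrableOn htop
  have hIic : ∫ x in Set.Iic (0:ℝ), g' x = g 0 - 0 :=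
    integral_Iic_of_hasDerivAt_of_tendsto (hderiv 0).continuousAt.continuousWithinAt
      (fun x _ => hderiv x) hg'int.integrableOn hbot
  have hsplit : ∫ x, g' x = 0 := by
    rw [← integral_add_compl (measurableSet_Iic (a := (0:ℝ))) hg'int, Set.compl_Iic,
      hIic, hIoi]
    ring
  have hexpand : ∫ x, g' x = (n + 1) * (∫ x, x ^ n * rexp (-b * x ^ 2))
      - 2 * b * ∫ x, x ^ (n + 2) * rexp (-b * x ^ 2) := by
    rw [hg']
    rw [MeasureTheory.integral_sub ((hint n).const_mul _) ((hint (n + 2)).const_mul _),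
      MeasureTheory.integral_const_mul, MeasureTheory.integral_const_mul]
  rw [hexpand] at hsplit
  have h2b : (2 * b) ≠ 0 := by positivity
  rw [div_mul_eq_mul_div, eq_comm, div_eq_iff h2b]
  linarith [hsplit]

lemma my_gauss_moment_odd {b : ℝ} {k : ℕ} (hk : Odd k) :
    ∫ x : ℝ, x ^ k * rexp (-b * x ^ 2) = 0 := by
  have h := integral_neg_eq_self (fun x : ℝ => x ^ k * rexp (-b * x ^ 2)) volume
  simp only [hk.neg_pow, neg_sq, neg_mul] at h
  rw [MeasureTheory.integral_neg] at h
  simp only [neg_mul]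
  linarith [h]

lemma my_integral_gaussianReal {v : ℝ≥0} (hv : v ≠ 0) (f : ℝ → ℝ) :
    ∫ z, f z ∂(gaussianReal 0 v) = ∫ z, gaussianPDFReal 0 v z * f z := by
  rw [gaussianReal_of_var_ne_zero _ hv]
  have hmeas : Measurable fun x => (gaussianPDFReal 0 v x).toNNReal :=
    (measurable_gaussianPDFReal 0 v).real_toNNReal
  have hpdf : gaussianPDF 0 v = fun x => ((gaussianPDFReal 0 v x).toNNReal : ℝ≥0∞) := rfl
  rw [hpdf, integral_withDensity_eq_integral_smul hmeas]
  congr 1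
  funext z
  simp [NNReal.smul_def, Real.coe_toNNReal _ (gaussianPDFReal_nonneg 0 v z)]

/-- Sixth-order Gaussian expectation expansion with explicit remainder bound:
for a six times continuously differentiable `F` with sixth derivative bounded by `M`,
and `ξ ~ N(0,h)`,
`|E[F(m+ξ)] − F(m) − (h/2) F''(m) − (h²/8) F⁗(m)| ≤ (M/48) h³`. -/
theorem gaussian_expectation_expansion
    (h : ℝ) (hh : 0 < h) (m M : ℝ) (F : ℝ → ℝ)
    (hF : ContDiff ℝ 6 F)
    (hbound : ∀ z : ℝ, |iteratedDeriv 6 F z| ≤ M) :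
    |(∫ z, F (m + z) ∂(gaussianReal 0 h.toNNReal))
        - F m - (h / 2) * iteratedDeriv 2 F m - (h ^ 2 / 8) * iteratedDeriv 4 F m|
      ≤ (M / 48) * h ^ 3 := by
  have hM : (0:ℝ) ≤ M := le_trans (abs_nonneg _) (hbound 0)
  have hv0 : h.toNNReal ≠ 0 := by
    simp only [ne_eq, Real.toNNReal_eq_zero, not_le]
    exact hh
  have hvr : (h.toNNReal : ℝ) = h := Real.coe_toNNReal h hh.le
  set b : ℝ := (2 * h)⁻¹ with hbdef
  have hb : 0 < b := by positivity
  set c : ℝ := (Real.sqrt (2 * Real.pi * h))⁻¹ with hcdef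
  have hpdf : ∀ z : ℝ, gaussianPDFReal 0 h.toNNReal z = c * rexp (-b * z ^ 2) := by
    intro z
    rw [gaussianPDFReal, hvr, sub_zero, hcdef, hbdef]
    congr 1
    rw [neg_div, div_eq_inv_mul, neg_mul]
  -- moments
  set J : ℕ → ℝ := fun k => ∫ x : ℝ, x ^ k * rexp (-b * x ^ 2) with hJdef
  have h2b : (2 : ℝ) * b = h⁻¹ := by
    rw [hbdef, mul_inv, ← mul_assoc]
    norm_num
  have hrec : ∀ n : ℕ, J (n + 2) = ((n : ℝ) + 1) * h * J n := by
    intro n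
    have := my_gauss_moment_rec hb n
    rw [hJdef]
    simp only []
    rw [this, h2b, div_eq_mul_inv, inv_inv]
  have hJ1 : J 1 = 0 := my_gauss_moment_odd odd_one
  have hJ3 : J 3 = 0 := my_gauss_moment_odd (by decide)
  have hJ5 : J 5 = 0 := my_gauss_moment_odd (by decide)
  have hone : ∫ z, gaussianPDFReal 0 h.toNNReal z = 1 := integral_gaussianPDFReal_eq_one 0 hv0
  have hcJ0 : c * J 0 = 1 := by
    rw [← hone]
    rw [show (fun z => gaussianPDFReal 0 h.toNNReal z) = fun z => c * rexp (-b * z ^ 2) from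
      funext hpdf]
    rw [MeasureTheory.integral_const_mul]
    congr 1
    simp [hJdef]
  have hcJ2 : c * J 2 = h := by
    have := hrec 0
    norm_num at this
    rw [this, ← mul_assoc, mul_comm c h, mul_assoc, hcJ0, mul_one]
  have hcJ4 : c * J 4 = 3 * h ^ 2 := by
    have := hrec 2
    norm_num at this
    rw [this]
    calc c * (3 * h * J 2) = 3 * h * (c * J 2) := by ring
      _ = 3 * h ^ 2 := by rw [hcJ2]; ring
  have hcJ6 : c * J 6 = 15 * h ^ 3 := by
    have := hrec 4
    norm_num at this
    rw [this]
    calc c * (5 * h * J 4) = 5 * h * (c * J 4) := by ring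
      _ = 15 * h ^ 3 := by rw [hcJ4]; ring
  -- Taylor remainder
  set R : ℝ → ℝ := fun z =>
    F (m + z) - ∑ k ∈ Finset.range 6, iteratedDeriv k F m / k.factorial * z ^ k with hRdef
  have hF6 : ContDiff ℝ (6 : ℕ) F := by exact_mod_cast hF
  have hR : ∀ z : ℝ, |R z| ≤ M * |z| ^ 6 / 720 := by
    intro z
    have := my_taylor_bound M 6 F hF6 hbound m z
    simpa [Nat.factorial] using this
  -- continuity facts
  have hRcont : Continuous R := by
    apply Continuous.sub
    · exact hF.continuous.comp (continuous_const.add continuous_id)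
    · exact continuous_finset_sum _ fun k _ => continuous_const.mul (continuous_pow k)
  have hecont : Continuous fun z : ℝ => c * rexp (-b * z ^ 2) :=
    continuous_const.mul (Real.continuous_exp.comp (continuous_const.mul (continuous_pow 2)))
  -- integrability
  have hIk : ∀ k : ℕ, Integrable fun z : ℝ =>
      iteratedDeriv k F m / k.factorial * (c * (z ^ k * rexp (-b * z ^ 2))) :=
    fun k => ((my_integrable_pow_gauss hb k).const_mul c).const_mul _
  have habsbound : ∀ z : ℝ, ‖c * rexp (-b * z ^ 2) * R z‖
      ≤ c * M / 720 * (z ^ 6 * rexp (-b * z ^ 2)) := by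
    intro z
    have hc0 : (0:ℝ) ≤ c := by positivity
    have hz6 : |z| ^ 6 = z ^ 6 := by
      rw [pow_abs, abs_of_nonneg (by positivity)]
    rw [Real.norm_eq_abs, abs_mul, abs_of_nonneg (by positivity : (0:ℝ) ≤ c * rexp (-b * z ^ 2))]
    calc c * rexp (-b * z ^ 2) * |R z| ≤ c * rexp (-b * z ^ 2) * (M * |z| ^ 6 / 720) := by
          apply mul_le_mul_of_nonneg_left (hR z) (by positivity)
      _ = c * M / 720 * (z ^ 6 * rexp (-b * z ^ 2)) := by rw [hz6]; ring
  have hIR : Integrable fun z : ℝ => c * rexp (-b * z ^ 2) * R z := by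
    apply Integrable.mono' ((my_integrable_pow_gauss hb 6).const_mul (c * M / 720))
      (hecont.mul hRcont).aestronglyMeasurable
    filter_upwards with z
    exact habsbound z
  -- expansion of the integrand
  have hsplitfun : ∀ z : ℝ, gaussianPDFReal 0 h.toNNReal z * F (m + z)
      = (∑ k ∈ Finset.range 6,
          iteratedDeriv k F m / k.factorial * (c * (z ^ k * rexp (-b * z ^ 2))))
        + c * rexp (-b * z ^ 2) * R z := by
    intro z
    rw [hpdf z]
    have hFz : F (m + z)
        = (∑ k ∈ Finset.range 6, iteratedDeriv k F m / k.factorial * z ^ k) + R z := by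
      rw [hRdef]; ring
    rw [hFz, mul_add, Finset.mul_sum]
    congr 1
    · apply Finset.sum_congr rfl
      intro k _
      ring
  have hInt : ∫ z, gaussianPDFReal 0 h.toNNReal z * F (m + z)
      = (∑ k ∈ Finset.range 6, iteratedDeriv k F m / k.factorial * (c * J k))
        + ∫ z, c * rexp (-b * z ^ 2) * R z := by
    rw [show (fun z => gaussianPDFReal 0 h.toNNReal z * F (m + z))
        = fun z => (∑ k ∈ Finset.range 6,
            iteratedDeriv k F m / k.factorial * (c * (z ^ k * rexp (-b * z ^ 2))))
          + c * rexp (-b * z ^ 2) * R z from funext hsplitfun]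
    rw [MeasureTheory.integral_add (integrable_finset_sum _ fun k _ => hIk k) hIR,
      MeasureTheory.integral_finset_sum _ fun k _ => hIk k]
    congr 1
    apply Finset.sum_congr rfl
    intro k _
    rw [MeasureTheory.integral_const_mul, MeasureTheory.integral_const_mul]
  have hsumval : ∑ k ∈ Finset.range 6, iteratedDeriv k F m / k.factorial * (c * J k)
      = F m + (h / 2) * iteratedDeriv 2 F m + (h ^ 2 / 8) * iteratedDeriv 4 F m := by
    simp only [Finset.sum_range_succ, Finset.sum_range_zero, zero_add]
    rw [hJ1, hJ3, hJ5, hcJ0, hcJ2, hcJ4]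
    simp only [mul_zero, add_zero, iteratedDeriv_zero, Nat.factorial]
    push_cast
    ring
  have htail : |∫ z, c * rexp (-b * z ^ 2) * R z| ≤ (M / 48) * h ^ 3 := by
    have h1 : |∫ z, c * rexp (-b * z ^ 2) * R z| ≤ ∫ z, ‖c * rexp (-b * z ^ 2) * R z‖ := by
      rw [← Real.norm_eq_abs]
      exact MeasureTheory.norm_integral_le_integral_norm _
    have h2 : ∫ z, ‖c * rexp (-b * z ^ 2) * R z‖
        ≤ ∫ z, c * M / 720 * (z ^ 6 * rexp (-b * z ^ 2)) := by
      apply MeasureTheory.integral_mono hIR.norm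
        ((my_integrable_pow_gauss hb 6).const_mul (c * M / 720))
      intro z
      exact habsbound z
    have h3 : ∫ z, c * M / 720 * (z ^ 6 * rexp (-b * z ^ 2)) = (M / 48) * h ^ 3 := by
      rw [MeasureTheory.integral_const_mul]
      have : c * M / 720 * J 6 = M / 720 * (c * J 6) := by ring
      rw [show (∫ z : ℝ, z ^ 6 * rexp (-b * z ^ 2)) = J 6 from rfl, this, hcJ6]
      ring
    calc |∫ z, c * rexp (-b * z ^ 2) * R z| ≤ _ := h1
      _ ≤ _ := h2
      _ = _ := h3
  have hconv : ∫ z, F (m + z) ∂(gaussianReal 0 h.toNNReal)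
      = ∫ z, gaussianPDFReal 0 h.toNNReal z * F (m + z) :=
    my_integral_gaussianReal hv0 _
  have hfinal : (∫ z, F (m + z) ∂(gaussianReal 0 h.toNNReal))
      - F m - (h / 2) * iteratedDeriv 2 F m - (h ^ 2 / 8) * iteratedDeriv 4 F m
      = ∫ z, c * rexp (-b * z ^ 2) * R z := by
    rw [hconv, hInt, hsumval]
    ring
  rw [hfinal]
  exact htail
end

section
/- Let θ, μ, b > 0 with φ_h(x) ≥ 0, let h > 0 and ξ ~ N(0,h). Then the one-step LT scheme for the CIR process satisfies E[X^{LT}] = μ̃ + e^{−θh}(x − μ̃) + θbh/2. Consequently the one-step bias E[X^{LT}] − (μ + e^{−θh}(x − μ)) equals (b/2)(θh − 1 + e^{−θh}), which is independent of x and satisfies 0 ≤ (b/2)(θh − 1 + e^{−θh}) ≤ (bθ²/4)h², so the LT conditional-mean bias is of order h². -/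
open MeasureTheory ProbabilityTheory

/-- `μ̃ = μ − b/2` for the CIR splitting. -/
noncomputable def cirMuTilde (μ b : ℝ) : ℝ := μ - b / 2

/-- Exact flow `φ_h(x) = μ̃ + e^{−θh}(x − μ̃)` of the deterministic CIR subequation. -/
noncomputable def cirPhi (θ μ b h x : ℝ) : ℝ :=
  cirMuTilde μ b + Real.exp (-θ * h) * (x - cirMuTilde μ b)

/-- One-step Lie–Trotter scheme for the CIR process started at `x`, with Gaussian
increment `z`. -/
noncomputable def cirLT (θ μ b h x z : ℝ) : ℝ :=
  (Real.sqrt (cirPhi θ μ b h x) + (Real.sqrt (2 * θ * b) / 2) * z) ^ 2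

section Aux

open Real
open scoped NNReal ENNReal

private lemma myJ1 (c : ℝ) : ∫ z : ℝ, z * Real.exp (-c * z^2) = 0 := by
  simp only [neg_mul]
  have h := integral_neg_eq_self (fun z : ℝ => z * Real.exp (-(c * z^2))) volume
  simp only [neg_sq, neg_mul, neg_neg] at h
  rw [integral_neg] at h
  linarith

private lemma myInt1 (c : ℝ) (hc : 0 < c) :
    Integrable fun z : ℝ => z * Real.exp (-c * z^2) := by
  simpa [Real.rpow_one] using integrable_rpow_mul_exp_neg_mul_sq hc (s := 1) (by norm_num)

private lemma myInt2 (c : ℝ) (hc : 0 < c) :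
    Integrable fun z : ℝ => z ^ 2 * Real.exp (-c * z^2) := by
  simpa [Real.rpow_two] using integrable_rpow_mul_exp_neg_mul_sq hc (s := 2) (by norm_num)

private lemma myJ2 (c : ℝ) (hc : 0 < c) :
    ∫ z : ℝ, z ^ 2 * Real.exp (-c * z^2) = Real.sqrt (Real.pi / c) / (2 * c) := by
  have hu : ∀ z : ℝ, HasDerivAt (fun y : ℝ => y) 1 z := fun z => hasDerivAt_id z
  have hv : ∀ z : ℝ, HasDerivAt (fun y : ℝ => -(2*c)⁻¹ * Real.exp (-c * y^2))
      (z * Real.exp (-c * z^2)) z := by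
    intro z
    have h1 : HasDerivAt (fun y : ℝ => -c * y ^ 2) (-c * (2 * z)) z := by
      simpa using ((hasDerivAt_pow 2 z).const_mul (-c))
    have h2 := (h1.exp).const_mul (-(2*c)⁻¹)
    refine h2.congr_deriv ?_
    field_simp
  have key := integral_mul_deriv_eq_deriv_mul_of_integrable (fun z _ => hu z) (fun z _ => hv z)
    (by simpa [Pi.mul_def, mul_assoc, sq] using myInt2 c hc)
    (by simpa [Pi.mul_def] using ((integrable_exp_neg_mul_sq hc).const_mul (-(2*c)⁻¹)))
    (by simpa [Pi.mul_def, mul_comm, mul_left_comm] using ((myInt1 c hc).const_mul (-(2*c)⁻¹)))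
  have lhs : ∫ z : ℝ, z * (z * Real.exp (-c * z^2)) = ∫ z : ℝ, z ^ 2 * Real.exp (-c * z^2) := by
    congr 1; funext z; ring
  rw [lhs] at key
  simp only [one_mul] at key
  rw [key, integral_const_mul, integral_gaussian]
  field_simp

private lemma myGaussQuad (c C a k : ℝ) (hc : 0 < c) :
    ∫ z : ℝ, C * Real.exp (-c * z^2) * (a + k * z)^2
      = C * Real.sqrt (Real.pi / c) * (a^2 + k^2 / (2*c)) := by
  have e : (fun z : ℝ => C * Real.exp (-c*z^2) * (a + k*z)^2)
      = fun z : ℝ => (C*a^2) * Real.exp (-c*z^2) + (2*a*k*C) * (z * Real.exp (-c*z^2))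
        + (C*k^2) * (z^2 * Real.exp (-c*z^2)) := by funext z; ring
  have i0 : Integrable fun z : ℝ => (C*a^2) * Real.exp (-c*z^2) :=
    (integrable_exp_neg_mul_sq hc).const_mul (C*a^2)
  have i1 : Integrable fun z : ℝ => (2*a*k*C) * (z * Real.exp (-c*z^2)) :=
    (myInt1 c hc).const_mul (2*a*k*C)
  have i2 : Integrable fun z : ℝ => (C*k^2) * (z^2 * Real.exp (-c*z^2)) :=
    (myInt2 c hc).const_mul (C*k^2)
  have i01 : Integrable fun z : ℝ =>
      (C*a^2) * Real.exp (-c*z^2) + (2*a*k*C) * (z * Real.exp (-c*z^2)) := i0.add i1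
  rw [e, integral_add i01 i2, integral_add i0 i1, integral_const_mul,
    integral_const_mul, integral_const_mul, myJ1, myJ2 c hc, integral_gaussian]
  ring

private lemma myDensity (v : ℝ≥0) (hv : v ≠ 0) (g : ℝ → ℝ) :
    ∫ z, g z ∂(gaussianReal 0 v) = ∫ z, gaussianPDFReal 0 v z * g z := by
  rw [gaussianReal_of_var_ne_zero 0 hv]
  have : (gaussianPDF 0 v) = fun z => ((gaussianPDFReal 0 v z).toNNReal : ℝ≥0∞) := rfl
  rw [this, integral_withDensity_eq_integral_smul
    ((measurable_gaussianPDFReal 0 v).real_toNNReal) g]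
  congr 1
  funext z
  rw [NNReal.smul_def, smul_eq_mul, Real.coe_toNNReal _ (gaussianPDFReal_nonneg 0 v z)]

private lemma myExpBound (t : ℝ) (ht : 0 ≤ t) : Real.exp (-t) ≤ 1 - t + t^2/2 := by
  set g : ℝ → ℝ := fun s => 1 - s + s^2/2 - Real.exp (-s) with hg
  have hderiv : ∀ s : ℝ, HasDerivAt g (-1 + s + Real.exp (-s)) s := by
    intro s
    have h1 : HasDerivAt (fun y : ℝ => 1 - y) (-1) s := by
      simpa using (hasDerivAt_id s).const_sub 1
    have h2 : HasDerivAt (fun y : ℝ => y^2/2) s s := by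
      simpa using (hasDerivAt_pow 2 s).div_const 2
    have h3 : HasDerivAt (fun y : ℝ => Real.exp (-y)) (-Real.exp (-s)) s := by
      simpa using ((hasDerivAt_id s).neg).exp
    have := (h1.add h2).sub h3
    refine this.congr_deriv ?_
    ring
  have hmono : Monotone g := by
    apply monotone_of_deriv_nonneg
    · exact fun s => (hderiv s).differentiableAt
    · intro s
      rw [(hderiv s).deriv]
      nlinarith [Real.add_one_le_exp (-s)]
  have h0 : g 0 = 0 := by simp [hg]
  have := hmono ht
  rw [h0] at this
  simp only [hg] at this
  linarith

end Aux

/-- One-step conditional mean of the CIR Lie–Trotter scheme: it equals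
`μ̃ + e^{−θh}(x − μ̃) + θbh/2`; the bias against the exact CIR conditional mean
`μ + e^{−θh}(x − μ)` is `(b/2)(θh − 1 + e^{−θh})`, independent of `x`,
nonnegative, and bounded by `(bθ²/4)h²`. -/
theorem cir_LT_one_step_mean
    (θ μ b h x : ℝ) (hθ : 0 < θ) (hμ : 0 < μ) (hb : 0 < b) (hh : 0 < h)
    (hφ : 0 ≤ cirPhi θ μ b h x) :
    (∫ z, cirLT θ μ b h x z ∂(gaussianReal 0 h.toNNReal))
        = cirMuTilde μ b + Real.exp (-θ * h) * (x - cirMuTilde μ b) + θ * b * h / 2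
      ∧ (∫ z, cirLT θ μ b h x z ∂(gaussianReal 0 h.toNNReal))
          - (μ + Real.exp (-θ * h) * (x - μ))
        = (b / 2) * (θ * h - 1 + Real.exp (-θ * h))
      ∧ 0 ≤ (b / 2) * (θ * h - 1 + Real.exp (-θ * h))
      ∧ (b / 2) * (θ * h - 1 + Real.exp (-θ * h)) ≤ (b * θ ^ 2 / 4) * h ^ 2 := by
  have hπ := Real.pi_pos
  have hvR : (h.toNNReal : ℝ) = h := Real.coe_toNNReal h hh.le
  have hvne : h.toNNReal ≠ 0 := by
    simp only [ne_eq, Real.toNNReal_eq_zero, not_le]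
    exact hh
  set a := Real.sqrt (cirPhi θ μ b h x) with ha
  set k := Real.sqrt (2 * θ * b) / 2 with hk
  set c := (2*h)⁻¹ with hc
  set C := (Real.sqrt (2 * Real.pi * h))⁻¹ with hC
  have hcpos : 0 < c := by positivity
  have point : (fun z => gaussianPDFReal 0 h.toNNReal z * cirLT θ μ b h x z)
      = fun z => C * Real.exp (-c * z^2) * (a + k * z)^2 := by
    funext z
    rw [gaussianPDFReal_def, cirLT]
    simp only [hvR]
    have harg : -(z - 0)^2 / (2*h) = -c * z^2 := by
      rw [hc]; field_simp; ring
    rw [harg]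
  have hmean : (∫ z, cirLT θ μ b h x z ∂(gaussianReal 0 h.toNNReal))
      = cirPhi θ μ b h x + θ * b * h / 2 := by
    rw [myDensity _ hvne, point, myGaussQuad c C a k hcpos]
    have hCsq : C * Real.sqrt (Real.pi / c) = 1 := by
      rw [hC, hc]
      have : Real.pi / (2*h)⁻¹ = 2 * Real.pi * h := by field_simp
      rw [this]
      exact inv_mul_cancel₀ (by positivity)
    have ha2 : a^2 = cirPhi θ μ b h x := Real.sq_sqrt hφ
    have hk2 : k^2 = θ * b / 2 := by
      rw [hk, div_pow, Real.sq_sqrt (by positivity : (0:ℝ) ≤ 2 * θ * b)]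
      ring
    have h2c : k^2 / (2*c) = θ * b * h / 2 := by
      rw [hk2, hc]
      field_simp
    rw [hCsq, one_mul, ha2, h2c]
  have key := Real.add_one_le_exp (-θ * h)
  have keyexp := myExpBound (θ*h) (by positivity)
  have hexparg : -(θ*h) = -θ * h := by ring
  rw [hexparg] at keyexp
  refine ⟨?_, ?_, ?_, ?_⟩
  · rw [hmean, cirPhi]
  · rw [hmean, cirPhi, cirMuTilde]
    ring
  · nlinarith [hb.le]
  · nlinarith [hb.le, mul_le_mul_of_nonneg_left keyexp (by positivity : (0:ℝ) ≤ b/2)]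
end

section
/- Let θ, μ, b > 0, h > 0 with φ_{h/2}(x) ≥ 0, and ξ ~ N(0,h). Then the one-step Strang scheme for the CIR process satisfies E[X^{S}] = μ̃ + e^{−θh}(x − μ̃) + (θbh/2)·e^{−θh/2}. Consequently the one-step bias E[X^{S}] − (μ + e^{−θh}(x − μ)) equals (b/2)(θh·e^{−θh/2} − 1 + e^{−θh}), which is independent of x and satisfies |(b/2)(θh·e^{−θh/2} − 1 + e^{−θh})| ≤ (bθ³/24)·h³ for all h ∈ (0, 1/θ], so the Strang conditional-mean bias is of order h³. -/
open MeasureTheory Real Set Filter ProbabilityTheory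
open scoped NNReal ENNReal

lemma mono_aux {g g' : ℝ → ℝ} (hd : ∀ y, HasDerivAt g (g' y) y)
    (h0 : ∀ y, 0 ≤ y → 0 ≤ g' y) {x : ℝ} (hx : 0 ≤ x) : g 0 ≤ g x := by
  have hm : MonotoneOn g (Set.Ici 0) :=
    monotoneOn_of_deriv_nonneg (convex_Ici 0)
      (fun y _ => (hd y).continuousAt.continuousWithinAt)
      (fun y _ => (hd y).differentiableAt.differentiableWithinAt)
      (fun y hy => by rw [(hd y).deriv]; exact h0 y (le_of_lt (by simpa using hy)))
  exact hm (Set.mem_Ici.mpr (le_refl 0)) (Set.mem_Ici.mpr hx) hx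

lemma hasDerivAt_exp_neg (y : ℝ) :
    HasDerivAt (fun t : ℝ => Real.exp (-t)) (-Real.exp (-y)) y := by
  simpa using (hasDerivAt_neg y).exp

lemma exp_neg_le2 (x : ℝ) (hx : 0 ≤ x) : Real.exp (-x) ≤ 1 - x + x^2/2 := by
  have key := mono_aux (g := fun t : ℝ => 1 - t + t^2/2 - Real.exp (-t))
    (g' := fun y => -1 + y + Real.exp (-y))
    (fun y => by
      have h2 : HasDerivAt (fun t : ℝ => 1 - t + t^2/2) (-1 + y) y := by
        have := ((hasDerivAt_const y (1:ℝ)).sub (hasDerivAt_id y)).add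
          ((hasDerivAt_pow 2 y).div_const 2)
        refine this.congr_deriv ?_
        all_goals norm_num
        all_goals ring
      have := h2.sub (hasDerivAt_exp_neg y)
      refine this.congr_deriv ?_; ring)
    (fun y hy => by show (0:ℝ) ≤ -1 + y + Real.exp (-y); have := Real.add_one_le_exp (-y); linarith) hx
  simp only [neg_zero, Real.exp_zero] at key
  norm_num at key
  linarith

lemma exp_neg_ge3 (x : ℝ) (hx : 0 ≤ x) : 1 - x + x^2/2 - x^3/6 ≤ Real.exp (-x) := by
  have key := mono_aux (g := fun t : ℝ => Real.exp (-t) - (1 - t + t^2/2 - t^3/6))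
    (g' := fun y => -Real.exp (-y) + (1 - y + y^2/2))
    (fun y => by
      have h2 : HasDerivAt (fun t : ℝ => 1 - t + t^2/2 - t^3/6) (-1 + y - y^2/2) y := by
        have := (((hasDerivAt_const y (1:ℝ)).sub (hasDerivAt_id y)).add
          ((hasDerivAt_pow 2 y).div_const 2)).sub ((hasDerivAt_pow 3 y).div_const 6)
        refine this.congr_deriv ?_
        all_goals norm_num
        all_goals ring
      have := (hasDerivAt_exp_neg y).sub h2
      refine this.congr_deriv ?_; ring)
    (fun y hy => by show (0:ℝ) ≤ -Real.exp (-y) + (1 - y + y^2/2); have := exp_neg_le2 y hy; linarith) hx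
  simp only [neg_zero, Real.exp_zero] at key
  norm_num at key
  linarith

lemma exp_neg_le4 (x : ℝ) (hx : 0 ≤ x) :
    Real.exp (-x) ≤ 1 - x + x^2/2 - x^3/6 + x^4/24 := by
  have key := mono_aux
    (g := fun t : ℝ => 1 - t + t^2/2 - t^3/6 + t^4/24 - Real.exp (-t))
    (g' := fun y => Real.exp (-y) - (1 - y + y^2/2 - y^3/6))
    (fun y => by
      have h2 : HasDerivAt (fun t : ℝ => 1 - t + t^2/2 - t^3/6 + t^4/24)
          (-1 + y - y^2/2 + y^3/6) y := by
        have := ((((hasDerivAt_const y (1:ℝ)).sub (hasDerivAt_id y)).add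
          ((hasDerivAt_pow 2 y).div_const 2)).sub ((hasDerivAt_pow 3 y).div_const 6)).add
          ((hasDerivAt_pow 4 y).div_const 24)
        refine this.congr_deriv ?_
        all_goals norm_num
        all_goals ring
      have := h2.sub (hasDerivAt_exp_neg y)
      refine this.congr_deriv ?_; ring)
    (fun y hy => by show (0:ℝ) ≤ Real.exp (-y) - (1 - y + y^2/2 - y^3/6); have := exp_neg_ge3 y hy; linarith) hx
  simp only [neg_zero, Real.exp_zero] at key
  norm_num at key
  linarith


lemma tendsto_mul_exp_atTop {b : ℝ} (hb : 0 < b) :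
    Tendsto (fun x : ℝ => x * Real.exp (-b * x^2)) atTop (nhds 0) := by
  have hlin : Tendsto (fun x : ℝ => -(1/2) * x) atTop atBot :=
    tendsto_id.const_mul_atTop_of_neg (by norm_num : (-(1/2):ℝ) < 0)
  have h := (rpow_mul_exp_neg_mul_sq_isLittleO_exp_neg hb 1).tendsto_zero_of_tendsto
    (Real.tendsto_exp_atBot.comp hlin)
  simpa using h

lemma tendsto_mul_exp_atBot {b : ℝ} (hb : 0 < b) :
    Tendsto (fun x : ℝ => x * Real.exp (-b * x^2)) atBot (nhds 0) := by
  have h := ((tendsto_mul_exp_atTop hb).neg).comp tendsto_neg_atBot_atTop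
  simp only [Function.comp_def, neg_neg, neg_sq, neg_mul, neg_zero] at h
  simpa using h

lemma tendsto_sq_atTop : Tendsto (fun x : ℝ => x^2) atTop atTop :=
  tendsto_pow_atTop two_ne_zero

lemma tendsto_sq_atBot : Tendsto (fun x : ℝ => x^2) atBot atTop := by
  have := tendsto_sq_atTop.comp tendsto_neg_atBot_atTop
  simpa [Function.comp_def, neg_sq] using this

lemma tendsto_exp_neg_sq {b : ℝ} (hb : 0 < b) {l : Filter ℝ}
    (hl : Tendsto (fun x : ℝ => x^2) l atTop) :
    Tendsto (fun x : ℝ => Real.exp (-b * x^2)) l (nhds 0) := by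
  exact Real.tendsto_exp_atBot.comp
    (hl.const_mul_atTop_of_neg (by linarith : -b < 0))

lemma hasDerivAt_F1 {b : ℝ} (hb : 0 < b) (y : ℝ) :
    HasDerivAt (fun x : ℝ => -(2*b)⁻¹ * Real.exp (-b * x^2))
      (y * Real.exp (-b * y^2)) y := by
  have h1 : HasDerivAt (fun x : ℝ => -b * x^2) (-b * (2*y)) y := by
    simpa using ((hasDerivAt_pow 2 y).const_mul (-b))
  have := (h1.exp).const_mul (-(2*b)⁻¹)
  refine this.congr_deriv ?_
  field_simp

lemma hasDerivAt_F2 {b : ℝ} (hb : 0 < b) (y : ℝ) :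
    HasDerivAt (fun x : ℝ => x * Real.exp (-b * x^2))
      (Real.exp (-b * y^2) - 2*b*(y^2 * Real.exp (-b * y^2))) y := by
  have h1 : HasDerivAt (fun x : ℝ => -b * x^2) (-b * (2*y)) y := by
    simpa using ((hasDerivAt_pow 2 y).const_mul (-b))
  have := (hasDerivAt_id y).mul h1.exp
  refine this.congr_deriv ?_
  simp
  ring

lemma integrable_mul_exp {b : ℝ} (hb : 0 < b) :
    Integrable (fun x : ℝ => x * Real.exp (-b * x^2)) := by
  have := integrable_rpow_mul_exp_neg_mul_sq hb (s := 1) (by norm_num)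
  simpa using this

lemma integrable_sq_mul_exp {b : ℝ} (hb : 0 < b) :
    Integrable (fun x : ℝ => x^2 * Real.exp (-b * x^2)) := by
  have := integrable_rpow_mul_exp_neg_mul_sq hb (s := 2) (by norm_num)
  have h2 : ∀ x : ℝ, x ^ (2:ℝ) = x ^ 2 := fun x => by
    rw [show ((2:ℝ) = ((2:ℕ):ℝ)) by norm_num, Real.rpow_natCast]
  simpa only [h2] using this

lemma integral_mul_exp_eq_zero {b : ℝ} (hb : 0 < b) :
    ∫ x : ℝ, x * Real.exp (-b * x^2) = 0 := by
  rw [← intervalIntegral.integral_Iic_add_Ioi (b := (0:ℝ))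
    (integrable_mul_exp hb).integrableOn (integrable_mul_exp hb).integrableOn]
  have h1 : ∫ x in Iic (0:ℝ), x * Real.exp (-b * x^2)
      = (fun x : ℝ => -(2*b)⁻¹ * Real.exp (-b * x^2)) 0 - 0 :=
    integral_Iic_of_hasDerivAt_of_tendsto' (fun y _ => hasDerivAt_F1 hb y)
      (integrable_mul_exp hb).integrableOn
      (by simpa using ((tendsto_exp_neg_sq hb tendsto_sq_atBot).const_mul (-(2*b)⁻¹)))
  have h2 : ∫ x in Ioi (0:ℝ), x * Real.exp (-b * x^2)
      = 0 - (fun x : ℝ => -(2*b)⁻¹ * Real.exp (-b * x^2)) 0 :=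
    integral_Ioi_of_hasDerivAt_of_tendsto' (fun y _ => hasDerivAt_F1 hb y)
      (integrable_mul_exp hb).integrableOn
      (by simpa using ((tendsto_exp_neg_sq hb tendsto_sq_atTop).const_mul (-(2*b)⁻¹)))
  rw [h1, h2]
  ring

lemma integral_sq_mul_exp {b : ℝ} (hb : 0 < b) :
    ∫ x : ℝ, x^2 * Real.exp (-b * x^2) = Real.sqrt (π / b) / (2*b) := by
  have hder : ∫ x : ℝ, (Real.exp (-b * x^2) - 2*b*(x^2 * Real.exp (-b * x^2))) = 0 := by
    rw [← intervalIntegral.integral_Iic_add_Ioi (b := (0:ℝ))]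
    rotate_left
    · exact ((integrable_exp_neg_mul_sq hb).sub
        ((integrable_sq_mul_exp hb).const_mul (2*b))).integrableOn
    · exact ((integrable_exp_neg_mul_sq hb).sub
        ((integrable_sq_mul_exp hb).const_mul (2*b))).integrableOn
    have h1 : ∫ x in Iic (0:ℝ), (Real.exp (-b * x^2) - 2*b*(x^2 * Real.exp (-b * x^2)))
        = (fun x : ℝ => x * Real.exp (-b * x^2)) 0 - 0 :=
      integral_Iic_of_hasDerivAt_of_tendsto' (fun y _ => hasDerivAt_F2 hb y)
        (((integrable_exp_neg_mul_sq hb).sub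
          ((integrable_sq_mul_exp hb).const_mul (2*b))).integrableOn)
        (tendsto_mul_exp_atBot hb)
    have h2 : ∫ x in Ioi (0:ℝ), (Real.exp (-b * x^2) - 2*b*(x^2 * Real.exp (-b * x^2)))
        = 0 - (fun x : ℝ => x * Real.exp (-b * x^2)) 0 :=
      integral_Ioi_of_hasDerivAt_of_tendsto' (fun y _ => hasDerivAt_F2 hb y)
        (((integrable_exp_neg_mul_sq hb).sub
          ((integrable_sq_mul_exp hb).const_mul (2*b))).integrableOn)
        (tendsto_mul_exp_atTop hb)
    rw [h1, h2]
    ring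
  rw [integral_sub (integrable_exp_neg_mul_sq hb)
    ((integrable_sq_mul_exp hb).const_mul (2*b)),
    MeasureTheory.integral_const_mul, integral_gaussian] at hder
  have h2b : (2*b) ≠ 0 := by positivity
  field_simp at hder ⊢
  linarith

lemma integral_gaussianReal_eq {v : ℝ≥0} (hv : v ≠ 0) (g : ℝ → ℝ) :
    ∫ z, g z ∂(gaussianReal 0 v) = ∫ x, gaussianPDFReal 0 v x * g x := by
  rw [gaussianReal_of_var_ne_zero _ hv]
  have hmeas : Measurable fun x => (gaussianPDFReal 0 v x).toNNReal :=
    (measurable_gaussianPDFReal 0 v).real_toNNReal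
  have hrw : gaussianPDF 0 v = fun x => ((gaussianPDFReal 0 v x).toNNReal : ℝ≥0∞) := rfl
  rw [hrw, integral_withDensity_eq_integral_smul hmeas g]
  congr 1
  funext x
  rw [NNReal.smul_def, smul_eq_mul, Real.coe_toNNReal _ (gaussianPDFReal_nonneg 0 v x)]

lemma integral_quad_gaussianReal {v : ℝ≥0} (hv : v ≠ 0) (A B C : ℝ) :
    ∫ z, (A + B*z + C*z^2) ∂(gaussianReal 0 v) = A + C*(v:ℝ) := by
  have hvpos : (0:ℝ) < v := by positivity
  set K : ℝ := (Real.sqrt (2 * π * (v:ℝ)))⁻¹ with hK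
  set b : ℝ := (2*(v:ℝ))⁻¹ with hb
  have hbpos : 0 < b := by positivity
  have hpdf : ∀ x : ℝ, gaussianPDFReal 0 v x = K * Real.exp (-b * x^2) := by
    intro x
    rw [gaussianPDFReal]
    congr 1
    rw [hb]
    ring_nf
  rw [integral_gaussianReal_eq hv]
  have hfun : (fun x => gaussianPDFReal 0 v x * (A + B*x + C*x^2))
      = fun x => (A*K) * Real.exp (-b*x^2) + (B*K) * (x * Real.exp (-b*x^2))
          + (C*K) * (x^2 * Real.exp (-b*x^2)) := by
    funext x
    rw [hpdf x]
    ring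
  rw [hfun]
  have h1 : Integrable (fun x : ℝ => A*K*Real.exp (-b*x^2)) :=
    (integrable_exp_neg_mul_sq hbpos).const_mul _
  have h2 : Integrable (fun x : ℝ => B*K*(x*Real.exp (-b*x^2))) :=
    (integrable_mul_exp hbpos).const_mul _
  have h3 : Integrable (fun x : ℝ => C*K*(x^2*Real.exp (-b*x^2))) :=
    (integrable_sq_mul_exp hbpos).const_mul _
  have h12 : Integrable (fun x : ℝ => A*K*Real.exp (-b*x^2) + B*K*(x*Real.exp (-b*x^2))) :=
    h1.add h2
  rw [integral_add h12 h3, integral_add h1 h2,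
    MeasureTheory.integral_const_mul, MeasureTheory.integral_const_mul,
    MeasureTheory.integral_const_mul,
    integral_gaussian, integral_mul_exp_eq_zero hbpos, integral_sq_mul_exp hbpos]
  have hsqrt : Real.sqrt (π / b) = Real.sqrt (2 * π * v) := by
    congr 1
    rw [hb]
    field_simp
  have hKpos : 0 < Real.sqrt (2 * π * v) := by positivity
  rw [hsqrt, hK]
  have hvne : (v:ℝ) ≠ 0 := ne_of_gt hvpos
  have hKne : Real.sqrt (2*π*(v:ℝ)) ≠ 0 := ne_of_gt hKpos
  field_simp
  rw [hb]
  field_simp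
  ring



open MeasureTheory ProbabilityTheory

/-- One-step Strang splitting scheme for the CIR process started at `x`, with Gaussian
increment `z`:
`X^S = μ̃ + e^{−θh/2}((√(φ_{h/2}(x)) + (√(2θb)/2) z)² − μ̃)`. -/
noncomputable def cirStrang (θ μ b h x z : ℝ) : ℝ :=
  cirMuTilde μ b + Real.exp (-θ * h / 2) *
    ((Real.sqrt (cirPhi θ μ b (h / 2) x) + (Real.sqrt (2 * θ * b) / 2) * z) ^ 2
      - cirMuTilde μ b)

/-- One-step conditional mean of the CIR Strang scheme:
it equals `μ̃ + e^{−θh}(x − μ̃) + (θbh/2)e^{−θh/2}`; the bias against the exact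
CIR conditional mean `μ + e^{−θh}(x − μ)` is `(b/2)(θh e^{−θh/2} − 1 + e^{−θh})`,
independent of `x`, and of absolute size at most `(bθ³/24)h³` for `h ∈ (0, 1/θ]`. -/

theorem cir_Strang_one_step_mean
    (θ μ b h x : ℝ) (hθ : 0 < θ) (hμ : 0 < μ) (hb : 0 < b) (hh : 0 < h)
    (hφ : 0 ≤ cirPhi θ μ b (h / 2) x) :
    (∫ z, cirStrang θ μ b h x z ∂(gaussianReal 0 h.toNNReal))
        = cirMuTilde μ b + Real.exp (-θ * h) * (x - cirMuTilde μ b)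
            + (θ * b * h / 2) * Real.exp (-θ * h / 2)
      ∧ (∫ z, cirStrang θ μ b h x z ∂(gaussianReal 0 h.toNNReal))
          - (μ + Real.exp (-θ * h) * (x - μ))
        = (b / 2) * (θ * h * Real.exp (-θ * h / 2) - 1 + Real.exp (-θ * h))
      ∧ (h ≤ 1 / θ →
          |(b / 2) * (θ * h * Real.exp (-θ * h / 2) - 1 + Real.exp (-θ * h))|
            ≤ (b * θ ^ 3 / 24) * h ^ 3) := by
  set c : ℝ := cirMuTilde μ b with hc
  set a : ℝ := Real.sqrt (cirPhi θ μ b (h / 2) x) with ha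
  set s : ℝ := Real.sqrt (2 * θ * b) / 2 with hs
  have hv : h.toNNReal ≠ 0 := by
    simp [Real.toNNReal_eq_zero, not_le, hh]
  have hvr : ((h.toNNReal : ℝ)) = h := Real.coe_toNNReal h hh.le
  have hfun : (fun z => cirStrang θ μ b h x z)
      = fun z => (c + Real.exp (-θ*h/2) * (a^2 - c))
          + (2 * Real.exp (-θ*h/2) * a * s) * z
          + (Real.exp (-θ*h/2) * s^2) * z^2 := by
    funext z
    rw [cirStrang, ← hc, ← ha, ← hs]
    ring
  have hE : Real.exp (-θ*h/2) * Real.exp (-θ*h/2) = Real.exp (-θ*h) := by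
    rw [← Real.exp_add]
    ring_nf
  have hφ2 : cirPhi θ μ b (h/2) x = c + Real.exp (-θ*h/2) * (x - c) := by
    rw [cirPhi, ← hc, show -θ*(h/2) = -θ*h/2 by ring]
  have ha2 : a^2 = c + Real.exp (-θ*h/2) * (x - c) := by
    rw [ha, Real.sq_sqrt hφ, hφ2]
  have hs2 : s^2 = θ*b/2 := by
    rw [hs, div_pow, Real.sq_sqrt (by positivity : (0:ℝ) ≤ 2*θ*b)]
    ring
  have part1 : (∫ z, cirStrang θ μ b h x z ∂(gaussianReal 0 h.toNNReal))
      = c + Real.exp (-θ * h) * (x - c) + (θ * b * h / 2) * Real.exp (-θ * h / 2) := by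
    rw [hfun, integral_quad_gaussianReal hv, hvr, ha2, hs2, ← hE]
    ring
  refine ⟨part1, ?_, ?_⟩
  · rw [part1, hc, cirMuTilde]
    ring
  · intro hle
    have ht0 : 0 < θ * h := mul_pos hθ hh
    have ht1 : θ * h ≤ 1 := by
      rw [mul_comm]
      exact (le_div_iff₀ hθ).mp hle
    have hhalf : (0:ℝ) ≤ θ*h/2 := by positivity
    have e2a := exp_neg_le2 (θ*h/2) hhalf
    have e3a := exp_neg_ge3 (θ*h/2) hhalf
    have e3b := exp_neg_ge3 (θ*h) ht0.le
    have e4b := exp_neg_le4 (θ*h) ht0.le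
    rw [show -(θ*h/2) = -θ*h/2 by ring] at e2a e3a
    rw [show -(θ*h) = -θ*h by ring] at e3b e4b
    set t : ℝ := θ * h with htdef
    set u : ℝ := Real.exp (-θ*h/2) with hu
    set w : ℝ := Real.exp (-θ*h) with hw
    have habs : |t * u - 1 + w| ≤ t^3/12 := by
      rw [abs_le]
      constructor
      · nlinarith [mul_le_mul_of_nonneg_left e3a ht0.le, sq_nonneg t, pow_pos ht0 3,
          pow_pos ht0 4, mul_le_mul_of_nonneg_left ht1 (pow_pos ht0 3).le]
      · nlinarith [mul_le_mul_of_nonneg_left e2a ht0.le, pow_pos ht0 3,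
          mul_le_mul_of_nonneg_left ht1 (pow_pos ht0 3).le]
    have ht3 : t^3 = θ^3 * h^3 := by rw [htdef]; ring
    calc |b / 2 * (t * u - 1 + w)| = (b/2) * |t * u - 1 + w| := by
          rw [abs_mul, abs_of_nonneg (by positivity : (0:ℝ) ≤ b/2)]
      _ ≤ (b/2) * (t^3/12) := by
          exact mul_le_mul_of_nonneg_left habs (by positivity)
      _ = b * θ^3/24 * h^3 := by rw [ht3]; ring
end

section
/- Let θ > 0, b > 0, μ ≥ b, h > 0, x₀ ≥ 0, and let ξ₀, ξ₁, … be i.i.d. random variables with law N(0,h). Define the LT chain by X₀ = x₀ and X_{k+1} = (√(φ_h(X_k)) + (√(2θb)/2)ξ_k)² (which is well defined since φ_h(y) > 0 for every y ≥ 0). Then for every n ≥ 1, E[X_n] = e^{−θnh}x₀ + μ̃(1 − e^{−θnh}) + (θbh/2)·(1 − e^{−θnh})/(1 − e^{−θh}). -/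
open MeasureTheory ProbabilityTheory

open scoped NNReal ENNReal

section Gauss
open Real
variable {v : ℝ≥0}

lemma gauss_pdf_eq (x : ℝ) :
    gaussianPDFReal 0 v x = (Real.sqrt (2*π*v))⁻¹ * Real.exp (-(2*(v:ℝ))⁻¹ * x^2) := by
  rw [gaussianPDFReal]
  congr 1
  rw [sub_zero]
  field_simp

lemma gauss_integral_eq (hv : v ≠ 0) (g : ℝ → ℝ) :
    ∫ x, g x ∂(gaussianReal 0 v) = ∫ x, gaussianPDFReal 0 v x * g x := by
  rw [gaussianReal_of_var_ne_zero _ hv]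
  have : (gaussianPDF 0 v) = fun x => ((Real.toNNReal (gaussianPDFReal 0 v x) : ℝ≥0) : ℝ≥0∞) := by
    funext x; rw [gaussianPDF, ENNReal.ofReal]
  rw [this, integral_withDensity_eq_integral_smul
    ((measurable_gaussianPDFReal 0 v).real_toNNReal) g]
  congr 1 with x
  rw [NNReal.smul_def, Real.coe_toNNReal _ (gaussianPDFReal_nonneg 0 v x), smul_eq_mul]

lemma gauss_integrable_iff (hv : v ≠ 0) (g : ℝ → ℝ) :
    Integrable g (gaussianReal 0 v) ↔ Integrable (fun x => gaussianPDFReal 0 v x * g x) := by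
  rw [gaussianReal_of_var_ne_zero _ hv]
  have h0 : (gaussianPDF 0 v) = fun x => ((Real.toNNReal (gaussianPDFReal 0 v x) : ℝ≥0) : ℝ≥0∞) := by
    funext x; rw [gaussianPDF, ENNReal.ofReal]
  rw [h0, integrable_withDensity_iff_integrable_smul
    ((measurable_gaussianPDFReal 0 v).real_toNNReal)]
  have h1 : ∀ x : ℝ, (Real.toNNReal (gaussianPDFReal 0 v x)) • g x = gaussianPDFReal 0 v x * g x := by
    intro x
    rw [NNReal.smul_def, Real.coe_toNNReal _ (gaussianPDFReal_nonneg 0 v x), smul_eq_mul]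
  constructor <;> intro hI <;> refine hI.congr (Filter.Eventually.of_forall fun x => ?_)
  · exact h1 x
  · exact (h1 x).symm

lemma gauss_integrable_id (hv : (0:ℝ) < v) :
    Integrable (fun x => x) (gaussianReal 0 v) := by
  have hv' : v ≠ 0 := fun h => by simp [h] at hv
  rw [gauss_integrable_iff hv']
  have hb : (0:ℝ) < (2*(v:ℝ))⁻¹ := by positivity
  have := (integrable_mul_exp_neg_mul_sq hb).const_mul (Real.sqrt (2*π*v))⁻¹
  refine this.congr (Filter.Eventually.of_forall fun x => ?_)
  simp only [gauss_pdf_eq]; ring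

lemma gauss_integrable_sq (hv : (0:ℝ) < v) :
    Integrable (fun x => x^2) (gaussianReal 0 v) := by
  have hv' : v ≠ 0 := fun h => by simp [h] at hv
  rw [gauss_integrable_iff hv']
  have hb : (0:ℝ) < (2*(v:ℝ))⁻¹ := by positivity
  have h2 := (integrable_rpow_mul_exp_neg_mul_sq hb (s := 2) (by norm_num)).const_mul
    (Real.sqrt (2*π*v))⁻¹
  refine h2.congr (Filter.Eventually.of_forall fun x => ?_)
  simp only [gauss_pdf_eq, show ((2:ℝ)) = ((2:ℕ):ℝ) from by norm_num, Real.rpow_natCast]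
  push_cast; ring

lemma gauss_mean_zero :
    ∫ x, x ∂(gaussianReal 0 v) = 0 := by
  have hmap : (gaussianReal 0 v).map ((-1 : ℝ) * ·) = gaussianReal 0 v := by
    rw [gaussianReal_map_const_mul (-1)]
    norm_num
  have h1 : ∫ x, x ∂(gaussianReal 0 v) = ∫ x, (-1) * x ∂(gaussianReal 0 v) := by
    have h1' : ∫ x, x ∂((gaussianReal 0 v).map ((-1 : ℝ) * ·))
        = ∫ x, (-1) * x ∂(gaussianReal 0 v) :=
      integral_map (f := fun x : ℝ => x) (by fun_prop) aestronglyMeasurable_id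
    rw [hmap] at h1'
    exact h1'
  have h2 : ∫ x, (-1:ℝ) * x ∂(gaussianReal 0 v) = - ∫ x, x ∂(gaussianReal 0 v) := by
    rw [integral_const_mul, neg_one_mul]
  linarith [h1, h2]

lemma gauss_second_moment (hv : (0:ℝ) < v) :
    ∫ x, x^2 ∂(gaussianReal 0 v) = v := by
  have hv' : v ≠ 0 := fun h => by simp [h] at hv
  set b : ℝ := (2*(v:ℝ))⁻¹ with hbdef
  have hb : (0:ℝ) < b := by positivity
  rw [gauss_integral_eq hv']
  have hrw : ∀ x : ℝ, gaussianPDFReal 0 v x * x^2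
      = (Real.sqrt (2*π*v))⁻¹ * (x^2 * Real.exp (-b * x^2)) := by
    intro x; rw [gauss_pdf_eq x]; ring
  simp_rw [hrw]
  rw [integral_const_mul]
  have habs : ∫ x : ℝ, x^2 * Real.exp (-b * x^2)
      = 2 * ∫ x in Set.Ioi (0:ℝ), x^2 * Real.exp (-b * x^2) := by
    rw [← integral_comp_abs (f := fun x => x^2 * Real.exp (-b * x^2))]
    congr 1 with x
    rw [sq_abs]
  have hval : ∫ x in Set.Ioi (0:ℝ), x^(2:ℝ) * Real.exp (-b * x^(2:ℝ))
      = b ^ (-((2:ℝ)+1)/2) * (1/2) * Real.Gamma (((2:ℝ)+1)/2) :=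
    integral_rpow_mul_exp_neg_mul_rpow (by norm_num) (by norm_num) hb
  have hrpow : ∀ x : ℝ, x ^ (2:ℝ) = x ^ 2 := fun x => by
    rw [show ((2:ℝ)) = ((2:ℕ):ℝ) by norm_num, Real.rpow_natCast]
  simp_rw [hrpow] at hval
  rw [habs, hval]
  have hGamma : Real.Gamma (((2:ℝ)+1)/2) = (1/2) * Real.sqrt π := by
    rw [show ((2:ℝ)+1)/2 = 1/2 + 1 by norm_num, Real.Gamma_add_one (by norm_num),
      Real.Gamma_one_half_eq]
  rw [hGamma]
  have hbpow : b ^ (-((2:ℝ)+1)/2) = (2*(v:ℝ)) * Real.sqrt (2*(v:ℝ)) := by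
    rw [hbdef, neg_div, Real.rpow_neg (by positivity), Real.inv_rpow (by positivity), inv_inv,
      show ((2:ℝ)+1)/2 = 1 + (1/2:ℝ) from by norm_num, Real.rpow_add (by positivity),
      Real.rpow_one, ← Real.sqrt_eq_rpow]
  rw [hbpow]
  have hs1 : Real.sqrt (2*(v:ℝ)) * Real.sqrt π = Real.sqrt (2*π*(v:ℝ)) := by
    rw [← Real.sqrt_mul (by positivity)]; ring_nf
  have hspos : (0:ℝ) < Real.sqrt (2*π*(v:ℝ)) := Real.sqrt_pos.2 (by positivity)
  field_simp
  nlinarith [hs1, hspos, Real.sqrt_nonneg (2*(v:ℝ)), Real.sqrt_nonneg π]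
end Gauss


noncomputable def cirF (θ μ b h x₀ c : ℝ) : ℕ → (ℕ → ℝ) → ℝ
  | 0, _ => x₀
  | (k+1), y => (Real.sqrt (cirPhi θ μ b h (cirF θ μ b h x₀ c k y)) + c * y k)^2

lemma cirF_measurable (θ μ b h x₀ c : ℝ) (k : ℕ) : Measurable (cirF θ μ b h x₀ c k) := by
  induction k with
  | zero => exact measurable_const
  | succ k ih =>
    have hphi : Measurable (fun t : ℝ => cirPhi θ μ b h t) := by
      unfold cirPhi; fun_prop
    have : Measurable (fun y : ℕ → ℝ =>
        (Real.sqrt (cirPhi θ μ b h (cirF θ μ b h x₀ c k y)) + c * y k)^2) := by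
      apply Measurable.pow_const
      exact (Real.continuous_sqrt.measurable.comp (hphi.comp ih)).add
        (by fun_prop)
    exact this

lemma cirF_congr (θ μ b h x₀ c : ℝ) (k : ℕ) (y z : ℕ → ℝ) (hyz : ∀ i < k, y i = z i) :
    cirF θ μ b h x₀ c k y = cirF θ μ b h x₀ c k z := by
  induction k with
  | zero => rfl
  | succ k ih =>
    have h1 : cirF θ μ b h x₀ c k y = cirF θ μ b h x₀ c k z :=
      ih (fun i hi => hyz i (Nat.lt_succ_of_lt hi))
    simp only [cirF, h1, hyz k (Nat.lt_succ_self k)]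


/-- Global conditional mean of the CIR Lie–Trotter chain: with `X₀ = x₀` and
`X_{k+1} = (√(φ_h(X_k)) + (√(2θb)/2) ξ_k)²` for i.i.d. `ξ_k ~ N(0,h)`, one has for
every `n ≥ 1`
`E[X_n] = e^{−θnh} x₀ + μ̃(1 − e^{−θnh}) + (θbh/2)(1 − e^{−θnh})/(1 − e^{−θh})`. -/
theorem cir_LT_global_mean
    {Ω : Type*} [MeasurableSpace Ω] (P : Measure Ω) [IsProbabilityMeasure P]
    (θ μ b h x₀ : ℝ) (hθ : 0 < θ) (hb : 0 < b) (hμ : b ≤ μ) (hh : 0 < h)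
    (hx₀ : 0 ≤ x₀)
    (ξ : ℕ → Ω → ℝ) (hmeas : ∀ k, Measurable (ξ k))
    (hindep : iIndepFun ξ P)
    (hlaw : ∀ k, Measure.map (ξ k) P = gaussianReal 0 h.toNNReal)
    (X : ℕ → Ω → ℝ)
    (hX0 : ∀ ω, X 0 ω = x₀)
    (hXstep : ∀ k ω, X (k + 1) ω =
      (Real.sqrt (cirPhi θ μ b h (X k ω)) + (Real.sqrt (2 * θ * b) / 2) * ξ k ω) ^ 2) :
    ∀ n : ℕ, 1 ≤ n →
      (∫ ω, X n ω ∂P)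
        = Real.exp (-θ * n * h) * x₀
          + cirMuTilde μ b * (1 - Real.exp (-θ * n * h))
          + (θ * b * h / 2) * (1 - Real.exp (-θ * n * h)) / (1 - Real.exp (-θ * h)) := by
  set m := cirMuTilde μ b with hm
  set α := Real.exp (-θ * h) with hα
  set c := Real.sqrt (2 * θ * b) / 2 with hc
  have hα0 : 0 < α := Real.exp_pos _
  have hα1 : α < 1 := by
    rw [hα, Real.exp_lt_one_iff]
    nlinarith
  have hmpos : 0 < m := by
    rw [hm]; unfold cirMuTilde; linarith
  have hφeq : ∀ y : ℝ, cirPhi θ μ b h y = (1-α)*m + α*y := by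
    intro y; unfold cirPhi; rw [← hm, ← hα]; ring
  have hφpos : ∀ y : ℝ, 0 ≤ y → 0 < cirPhi θ μ b h y := by
    intro y hy; rw [hφeq]; nlinarith
  have hc2 : c^2 = θ*b/2 := by
    rw [hc, div_pow, Real.sq_sqrt (by positivity)]; ring
  set v := h.toNNReal with hvdef
  have hvh : ((v:ℝ≥0):ℝ) = h := Real.coe_toNNReal h hh.le
  have hv : (0:ℝ) < v := by rw [hvh]; exact hh
  have hvne : v ≠ 0 := fun hz => by simp [hz] at hv
  -- ξ facts
  have hξint : ∀ k, Integrable (ξ k) P := by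
    intro k
    have h1 : Integrable (fun x => x) (gaussianReal 0 v) := gauss_integrable_id hv
    rw [← hlaw k] at h1
    exact (integrable_map_measure aestronglyMeasurable_id (hmeas k).aemeasurable).mp h1
  have hξsqint : ∀ k, Integrable (fun ω => (ξ k ω)^2) P := by
    intro k
    have h1 : Integrable (fun x : ℝ => x^2) (gaussianReal 0 v) := gauss_integrable_sq hv
    rw [← hlaw k] at h1
    exact (integrable_map_measure (measurable_id.pow_const 2).aestronglyMeasurable
      (hmeas k).aemeasurable).mp h1
  have hξmean : ∀ k, ∫ ω, ξ k ω ∂P = 0 := by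
    intro k
    have h1 : ∫ x, x ∂(Measure.map (ξ k) P) = ∫ ω, ξ k ω ∂P :=
      integral_map (f := fun x : ℝ => x) (hmeas k).aemeasurable aestronglyMeasurable_id
    rw [hlaw k, gauss_mean_zero] at h1
    exact h1.symm
  have hξsq : ∀ k, ∫ ω, (ξ k ω)^2 ∂P = h := by
    intro k
    have h1 : ∫ x, x^2 ∂(Measure.map (ξ k) P) = ∫ ω, (ξ k ω)^2 ∂P :=
      integral_map (f := fun x : ℝ => x^2) (hmeas k).aemeasurable
        (measurable_id.pow_const 2).aestronglyMeasurable
    rw [hlaw k, gauss_second_moment hv, hvh] at h1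
    exact h1.symm
  -- chain facts
  have hXnn : ∀ k ω, 0 ≤ X k ω := by
    intro k ω
    cases k with
    | zero => rw [hX0]; exact hx₀
    | succ k => rw [hXstep]; positivity
  have hXmeas : ∀ k, Measurable (X k) := by
    intro k
    induction k with
    | zero =>
      have : X 0 = fun _ => x₀ := funext hX0
      rw [this]; exact measurable_const
    | succ k ih =>
      have : X (k+1) = fun ω => (Real.sqrt (cirPhi θ μ b h (X k ω)) + c * ξ k ω)^2 :=
        funext (hXstep k)
      rw [this]
      have hphi : Measurable (fun t : ℝ => cirPhi θ μ b h t) := by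
        unfold cirPhi; fun_prop
      exact ((Real.continuous_sqrt.measurable.comp (hphi.comp ih)).add
        ((hmeas k).const_mul c)).pow_const 2
  have hsqrtmeas : ∀ k, Measurable (fun ω => Real.sqrt (cirPhi θ μ b h (X k ω))) := by
    intro k
    have hphi : Measurable (fun t : ℝ => cirPhi θ μ b h t) := by
      unfold cirPhi; fun_prop
    exact Real.continuous_sqrt.measurable.comp (hphi.comp (hXmeas k))
  have hXF : ∀ k ω, X k ω = cirF θ μ b h x₀ c k (fun i => ξ i ω) := by
    intro k
    induction k with
    | zero => intro ω; rw [hX0]; rfl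
    | succ k ih =>
      intro ω
      rw [hXstep k ω, ih ω]
      rfl
  have hindepk : ∀ k, IndepFun (X k) (ξ k) P := by
    intro k
    have h1 := hindep.indepFun_finset (Finset.range k) {k} (by simp) hmeas
    set G : ((i : (Finset.range k : Finset ℕ)) → ℝ) → ℝ := fun g =>
      cirF θ μ b h x₀ c k (fun i => if hi : i ∈ Finset.range k then g ⟨i, hi⟩ else 0) with hG
    have hGmeas : Measurable G := by
      apply (cirF_measurable θ μ b h x₀ c k).comp
      apply measurable_pi_lambda
      intro i
      by_cases hi : i ∈ Finset.range k
      · simp only [hi, dif_pos]; exact measurable_pi_apply _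
      · simp only [hi, dif_neg, not_false_iff]; exact measurable_const
    have hEmeas : Measurable (fun g : ((i : ({k} : Finset ℕ)) → ℝ) =>
        g ⟨k, Finset.mem_singleton_self k⟩) := measurable_pi_apply _
    have h2 := h1.comp hGmeas hEmeas
    have hXeq : X k = fun ω => G (fun i : (Finset.range k : Finset ℕ) => ξ i ω) := by
      funext ω
      rw [hXF k ω, hG]
      apply cirF_congr
      intro i hi
      simp [Finset.mem_range.mpr hi]
    rw [hXeq]
    exact h2
  -- one-step recursion
  have hXint : ∀ k, Integrable (X k) P := by
    intro k
    induction k with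
    | zero =>
      have : X 0 = fun _ => x₀ := funext hX0
      rw [this]; exact integrable_const x₀
    | succ k ih =>
      have hphiint : Integrable (fun ω => cirPhi θ μ b h (X k ω)) P := by
        have heq : (fun ω => cirPhi θ μ b h (X k ω)) = fun ω => (1-α)*m + α * X k ω := by
          funext ω; rw [hφeq]
        rw [heq]
        exact (integrable_const ((1-α)*m)).add (ih.const_mul α)
      have hsqrtint : Integrable (fun ω => Real.sqrt (cirPhi θ μ b h (X k ω))) P := by
        refine Integrable.mono' ((integrable_const 1).add hphiint)
          (hsqrtmeas k).aestronglyMeasurable (Filter.Eventually.of_forall fun ω => ?_)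
        rw [Real.norm_eq_abs, abs_of_nonneg (Real.sqrt_nonneg _)]
        simp only [Pi.add_apply]
        have h1 : 0 ≤ cirPhi θ μ b h (X k ω) := (hφpos _ (hXnn k ω)).le
        nlinarith [Real.sq_sqrt h1, Real.sqrt_nonneg (cirPhi θ μ b h (X k ω)),
          sq_nonneg (Real.sqrt (cirPhi θ μ b h (X k ω)) - 1)]
      have hind : IndepFun (fun ω => Real.sqrt (cirPhi θ μ b h (X k ω))) (ξ k) P := by
        have hphi : Measurable (fun t : ℝ => cirPhi θ μ b h t) := by
          unfold cirPhi; fun_prop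
        exact (hindepk k).comp (Real.continuous_sqrt.measurable.comp hphi) measurable_id
      have hmulint : Integrable (fun ω => Real.sqrt (cirPhi θ μ b h (X k ω)) * ξ k ω) P :=
        hind.integrable_mul hsqrtint (hξint k)
      have hexp : X (k+1) = fun ω => cirPhi θ μ b h (X k ω)
          + (2*c) * (Real.sqrt (cirPhi θ μ b h (X k ω)) * ξ k ω) + c^2 * (ξ k ω)^2 := by
        funext ω
        rw [hXstep k ω, add_sq, Real.sq_sqrt (hφpos _ (hXnn k ω)).le]
        ring
      rw [hexp]
      exact ((hphiint.add (hmulint.const_mul (2*c))).add ((hξsqint k).const_mul (c^2)))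
  have hrec : ∀ k, ∫ ω, X (k+1) ω ∂P = (1-α)*m + α * (∫ ω, X k ω ∂P) + θ*b*h/2 := by
    intro k
    have hphiint : Integrable (fun ω => cirPhi θ μ b h (X k ω)) P := by
      have heq : (fun ω => cirPhi θ μ b h (X k ω)) = fun ω => (1-α)*m + α * X k ω := by
        funext ω; rw [hφeq]
      rw [heq]
      exact (integrable_const ((1-α)*m)).add ((hXint k).const_mul α)
    have hsqrtint : Integrable (fun ω => Real.sqrt (cirPhi θ μ b h (X k ω))) P := by
      refine Integrable.mono' ((integrable_const 1).add hphiint)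
        (hsqrtmeas k).aestronglyMeasurable (Filter.Eventually.of_forall fun ω => ?_)
      rw [Real.norm_eq_abs, abs_of_nonneg (Real.sqrt_nonneg _)]
      simp only [Pi.add_apply]
      have h1 : 0 ≤ cirPhi θ μ b h (X k ω) := (hφpos _ (hXnn k ω)).le
      nlinarith [Real.sq_sqrt h1, Real.sqrt_nonneg (cirPhi θ μ b h (X k ω)),
        sq_nonneg (Real.sqrt (cirPhi θ μ b h (X k ω)) - 1)]
    have hind : IndepFun (fun ω => Real.sqrt (cirPhi θ μ b h (X k ω))) (ξ k) P := by
      have hphi : Measurable (fun t : ℝ => cirPhi θ μ b h t) := by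
        unfold cirPhi; fun_prop
      exact (hindepk k).comp (Real.continuous_sqrt.measurable.comp hphi) measurable_id
    have hmulint : Integrable (fun ω => Real.sqrt (cirPhi θ μ b h (X k ω)) * ξ k ω) P :=
      hind.integrable_mul hsqrtint (hξint k)
    have hexp : X (k+1) = fun ω => cirPhi θ μ b h (X k ω)
        + (2*c) * (Real.sqrt (cirPhi θ μ b h (X k ω)) * ξ k ω) + c^2 * (ξ k ω)^2 := by
      funext ω
      rw [hXstep k ω, add_sq, Real.sq_sqrt (hφpos _ (hXnn k ω)).le]
      ring
    have hint3 : Integrable (fun ω => (2*c) * (Real.sqrt (cirPhi θ μ b h (X k ω)) * ξ k ω)) P :=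
      hmulint.const_mul (2*c)
    have hint1 : Integrable (fun ω => cirPhi θ μ b h (X k ω)
        + (2*c) * (Real.sqrt (cirPhi θ μ b h (X k ω)) * ξ k ω)) P := hphiint.add hint3
    have hint2 : Integrable (fun ω => c^2 * (ξ k ω)^2) P := (hξsqint k).const_mul (c^2)
    rw [hexp]
    have hmul0 : ∫ ω, Real.sqrt (cirPhi θ μ b h (X k ω)) * ξ k ω ∂P
        = (∫ ω, Real.sqrt (cirPhi θ μ b h (X k ω)) ∂P) * ∫ ω, ξ k ω ∂P :=
      hind.integral_fun_mul_eq_mul_integral hsqrtint.aestronglyMeasurable (hξint k).aestronglyMeasurable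
    rw [integral_add hint1 hint2, integral_add hphiint hint3, integral_const_mul,
      integral_const_mul, hmul0, hξmean k, hξsq k]
    have hphival : ∫ ω, cirPhi θ μ b h (X k ω) ∂P = (1-α)*m + α * (∫ ω, X k ω ∂P) := by
      have heq : (fun ω => cirPhi θ μ b h (X k ω)) = fun ω => (1-α)*m + α * X k ω := by
        funext ω; rw [hφeq]
      rw [heq, integral_add (integrable_const _) ((hXint k).const_mul α), integral_const,
        integral_const_mul]
      simp
    rw [hphival, hc2]
    ring
  -- closed form
  have h1α : (1:ℝ) - α ≠ 0 := sub_ne_zero.mpr (by linarith)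
  have hfin : ∀ n : ℕ, ∫ ω, X n ω ∂P
      = α^n * x₀ + m*(1-α^n) + (θ*b*h/2)*(1-α^n)/(1-α) := by
    intro n
    induction n with
    | zero =>
      have : X 0 = fun _ => x₀ := funext hX0
      rw [this, integral_const]
      simp
    | succ n ih =>
      rw [hrec n, ih, pow_succ]
      field_simp
      ring
  intro n hn
  rw [hfin n]
  have hαn : Real.exp (-θ * n * h) = α^n := by
    rw [show -θ * (n:ℝ) * h = (n:ℝ) * (-θ*h) by ring, Real.exp_nat_mul, ← hα]
  rw [hαn]
end

section
/- Let θ > 0, μ ∈ ℝ, h > 0, x₀ ∈ ℝ, and let ξ₀, ξ₁, … be i.i.d. with law N(0,h). Define the LT chain by X₀ = x₀, X_{k+1} = μ + e^{−θh}(X_k − μ) + √(2θ)·ξ_k, and the Strang chain by Y₀ = x₀, Y_{k+1} = μ + e^{−θh}(Y_k − μ) + √(2θ)·e^{−θh/2}·ξ_k. Then for every n ≥ 1, X_n is Gaussian with mean e^{−θnh}x₀ + μ(1 − e^{−θnh}) and variance 2θh(1 − e^{−2θnh})/(1 − e^{−2θh}), and Y_n is Gaussian with the same mean and variance 2θh·e^{−θh}(1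 − e^{−2θnh})/(1 − e^{−2θh}). In particular both schemes have exactly the conditional mean of the Ornstein–Uhlenbeck process and a biased variance. -/
open MeasureTheory ProbabilityTheory


open Real

lemma gaussianPDFReal_conv_pointwise (m₁ m₂ : ℝ) {v₁ v₂ : NNReal}
    (hv₁ : v₁ ≠ 0) (hv₂ : v₂ ≠ 0) (z x : ℝ) :
    gaussianPDFReal m₁ v₁ x * gaussianPDFReal m₂ v₂ (z - x)
      = gaussianPDFReal (m₁ + m₂) (v₁ + v₂) z
        * gaussianPDFReal (m₁ + v₁ * (z - m₁ - m₂) / (v₁ + v₂)) (v₁ * v₂ / (v₁ + v₂)) x := by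
  have h1 : (0:ℝ) < v₁ := by positivity
  have h2 : (0:ℝ) < v₂ := by positivity
  have hV : (0:ℝ) < (v₁:ℝ) + v₂ := by linarith
  have hw : ((v₁ * v₂ / (v₁ + v₂) : NNReal) : ℝ) = (v₁:ℝ) * v₂ / ((v₁:ℝ) + v₂) := by
    push_cast; ring
  simp only [gaussianPDFReal, NNReal.coe_add, hw]
  rw [mul_mul_mul_comm, mul_mul_mul_comm ((√(2 * π * ((v₁:ℝ) + v₂)))⁻¹)]
  congr 1
  · rw [← mul_inv, ← mul_inv, ← Real.sqrt_mul (by positivity), ← Real.sqrt_mul (by positivity)]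
    congr 2
    field_simp
  · rw [← Real.exp_add, ← Real.exp_add]
    congr 1
    field_simp
    ring



lemma conv_withDensity (μ : Measure ℝ) [SFinite μ] {g : ℝ → ENNReal} (hg : Measurable g) :
    Measure.conv μ (volume.withDensity g) = volume.withDensity (fun z => ∫⁻ x, g (z - x) ∂μ) := by
  have hmeas : Measurable (fun z => ∫⁻ x, g (z - x) ∂μ) := by
    apply Measurable.lintegral_prod_right
    exact hg.comp (measurable_fst.sub measurable_snd)
  ext s hs
  rw [Measure.conv, Measure.map_apply measurable_add hs,
    Measure.prod_apply (measurable_add hs), withDensity_apply _ hs]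
  have hinner : ∀ x : ℝ, (volume.withDensity g) (Prod.mk x ⁻¹' ((fun p : ℝ × ℝ => p.1 + p.2) ⁻¹' s))
      = ∫⁻ z in s, g (z - x) := by
    intro x
    have hpre : Prod.mk x ⁻¹' ((fun p : ℝ × ℝ => p.1 + p.2) ⁻¹' s) = (fun y => x + y) ⁻¹' s := rfl
    rw [hpre, withDensity_apply _ (measurable_const_add x hs),
      ← lintegral_indicator (measurable_const_add x hs) _, ← lintegral_indicator hs _]
    have : ∀ y : ℝ, Set.indicator ((fun y => x + y) ⁻¹' s) g y
        = Set.indicator s (fun z => g (z - x)) (x + y) := by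
      intro y
      by_cases hy : x + y ∈ s
      · rw [Set.indicator_of_mem hy, Set.indicator_of_mem (by simpa using hy)]
        simp
      · rw [Set.indicator_of_notMem hy, Set.indicator_of_notMem (by simpa using hy)]
    simp_rw [this]
    exact lintegral_add_left_eq_self (Set.indicator s (fun z => g (z - x))) x
  simp_rw [hinner]
  rw [lintegral_lintegral_swap]
  exact ((hg.comp (measurable_snd.sub measurable_fst))).aemeasurable



lemma dirac_conv (a : ℝ) (μ : Measure ℝ) [SFinite μ] :
    Measure.conv (Measure.dirac a) μ = μ.map (a + ·) := by
  rw [Measure.conv, Measure.dirac_prod, Measure.map_map measurable_add measurable_prodMk_left]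
  rfl

lemma conv_dirac (a : ℝ) (μ : Measure ℝ) [SFinite μ] :
    Measure.conv μ (Measure.dirac a) = μ.map (· + a) := by
  rw [Measure.conv, Measure.prod_dirac, Measure.map_map measurable_add measurable_prodMk_right]
  rfl

theorem gaussianReal_conv_gaussianReal (m₁ m₂ : ℝ) (v₁ v₂ : NNReal) :
    Measure.conv (gaussianReal m₁ v₁) (gaussianReal m₂ v₂) = gaussianReal (m₁ + m₂) (v₁ + v₂) := by
  by_cases hv₁ : v₁ = 0
  · subst hv₁
    rw [gaussianReal_zero_var, dirac_conv, gaussianReal_map_const_add]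
    rw [zero_add, add_comm m₂ m₁]
  by_cases hv₂ : v₂ = 0
  · subst hv₂
    rw [gaussianReal_zero_var, conv_dirac, gaussianReal_map_add_const, add_zero]
  -- main case
  have hV : v₁ + v₂ ≠ 0 := by simp [hv₁]
  have hw : v₁ * v₂ / (v₁ + v₂) ≠ 0 := by
    rw [div_ne_zero_iff]
    exact ⟨mul_ne_zero hv₁ hv₂, hV⟩
  rw [gaussianReal_of_var_ne_zero m₂ hv₂, conv_withDensity _ (measurable_gaussianPDF _ _),
    gaussianReal_of_var_ne_zero _ hV]
  congr 1
  ext z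
  rw [gaussianReal_of_var_ne_zero m₁ hv₁,
    lintegral_withDensity_eq_lintegral_mul _ (measurable_gaussianPDF _ _)
    (show Measurable fun x : ℝ => gaussianPDF m₂ v₂ (z - x) from
      (measurable_gaussianPDF _ _).comp (measurable_const.sub measurable_id))]
  simp only [Function.comp, Pi.mul_apply, gaussianPDF_def]
  calc ∫⁻ x, ENNReal.ofReal (gaussianPDFReal m₁ v₁ x) * ENNReal.ofReal (gaussianPDFReal m₂ v₂ (z - x))
      = ∫⁻ x, ENNReal.ofReal (gaussianPDFReal (m₁ + m₂) (v₁ + v₂) z)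
          * ENNReal.ofReal (gaussianPDFReal (m₁ + v₁ * (z - m₁ - m₂) / (v₁ + v₂)) (v₁ * v₂ / (v₁ + v₂)) x) := by
        congr 1
        ext x
        rw [← ENNReal.ofReal_mul (gaussianPDFReal_nonneg _ _ _),
          gaussianPDFReal_conv_pointwise m₁ m₂ hv₁ hv₂ z x,
          ENNReal.ofReal_mul (gaussianPDFReal_nonneg _ _ _)]
    _ = ENNReal.ofReal (gaussianPDFReal (m₁ + m₂) (v₁ + v₂) z) := by
        rw [lintegral_const_mul _ ((measurable_gaussianPDFReal _ _).ennreal_ofReal),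
          lintegral_gaussianPDFReal_eq_one _ hw, mul_one]

lemma indepFun_map_add_conv {Ω : Type*} [MeasurableSpace Ω] {P : Measure Ω}
    [IsProbabilityMeasure P] {f g : Ω → ℝ} (hf : Measurable f) (hg : Measurable g)
    (h : IndepFun f g P) :
    Measure.map (fun ω => f ω + g ω) P = Measure.conv (Measure.map f P) (Measure.map g P) := by
  rw [Measure.conv,
    ← (indepFun_iff_map_prod_eq_prod_map_map hf.aemeasurable hg.aemeasurable).mp h,
    Measure.map_map measurable_add (hf.prodMk hg)]
  rfl

/-- Exact distributions of the Lie–Trotter and Strang splitting chains for the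
Ornstein–Uhlenbeck process: with `X₀ = Y₀ = x₀`,
`X_{k+1} = μ + e^{−θh}(X_k − μ) + √(2θ) ξ_k` and
`Y_{k+1} = μ + e^{−θh}(Y_k − μ) + √(2θ) e^{−θh/2} ξ_k` for i.i.d. `ξ_k ~ N(0,h)`,
for every `n ≥ 1` the law of `X_n` is Gaussian with mean
`e^{−θnh} x₀ + μ(1 − e^{−θnh})` and variance `2θh(1 − e^{−2θnh})/(1 − e^{−2θh})`,
and the law of `Y_n` is Gaussian with the same mean and variance
`2θh e^{−θh}(1 − e^{−2θnh})/(1 − e^{−2θh})`. -/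
theorem ou_LT_Strang_chain_gaussian
    {Ω : Type*} [MeasurableSpace Ω] (P : Measure Ω) [IsProbabilityMeasure P]
    (θ μ h x₀ : ℝ) (hθ : 0 < θ) (hh : 0 < h)
    (ξ : ℕ → Ω → ℝ) (hmeas : ∀ k, Measurable (ξ k))
    (hindep : iIndepFun ξ P)
    (hlaw : ∀ k, Measure.map (ξ k) P = gaussianReal 0 h.toNNReal)
    (X Y : ℕ → Ω → ℝ)
    (hX0 : ∀ ω, X 0 ω = x₀)
    (hXstep : ∀ k ω, X (k + 1) ω =
      μ + Real.exp (-θ * h) * (X k ω - μ) + Real.sqrt (2 * θ) * ξ k ω)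
    (hY0 : ∀ ω, Y 0 ω = x₀)
    (hYstep : ∀ k ω, Y (k + 1) ω =
      μ + Real.exp (-θ * h) * (Y k ω - μ)
        + Real.sqrt (2 * θ) * Real.exp (-θ * h / 2) * ξ k ω) :
    ∀ n : ℕ, 1 ≤ n →
      Measure.map (X n) P
          = gaussianReal
              (Real.exp (-θ * n * h) * x₀ + μ * (1 - Real.exp (-θ * n * h)))
              ((2 * θ * h * (1 - Real.exp (-2 * θ * n * h))
                / (1 - Real.exp (-2 * θ * h))).toNNReal)
        ∧ Measure.map (Y n) P
            = gaussianReal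
                (Real.exp (-θ * n * h) * x₀ + μ * (1 - Real.exp (-θ * n * h)))
                ((2 * θ * h * Real.exp (-θ * h) * (1 - Real.exp (-2 * θ * n * h))
                  / (1 - Real.exp (-2 * θ * h))).toNNReal) := by
  -- the rescaled noises and their partial sums
  set η : ℕ → Ω → ℝ := fun k ω => Real.exp (θ * k * h) * ξ k ω with hη_def
  set S : ℕ → Ω → ℝ := fun n => ∑ j ∈ Finset.range n, η j with hS_def
  have hηmeas : ∀ k, Measurable (η k) := fun k => (hmeas k).const_mul _
  have hηindep : iIndepFun η P := by
    exact hindep.comp (fun k x => Real.exp (θ * k * h) * x)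
      (fun k => measurable_const_mul _)
  have hSapp : ∀ n ω, S n ω = ∑ j ∈ Finset.range n, η j ω := by
    intro n ω
    rw [hS_def]
    exact Finset.sum_apply ω (Finset.range n) η
  have hSmeas : ∀ n, Measurable (S n) := by
    intro n
    have : S n = fun ω => ∑ j ∈ Finset.range n, η j ω := funext fun ω => hSapp n ω
    rw [this]
    exact Finset.measurable_sum _ (fun j _ => hηmeas j)
  -- law of the rescaled noises
  have hηlaw : ∀ k, Measure.map (η k) P
      = gaussianReal 0 ((Real.exp (θ * k * h)) ^ 2 * h).toNNReal := by
    intro k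
    have : Measure.map (η k) P
        = (Measure.map (ξ k) P).map (fun x => Real.exp (θ * k * h) * x) := by
      rw [Measure.map_map (measurable_const_mul _) (hmeas k)]
      rfl
    rw [this, hlaw k, gaussianReal_map_const_mul, mul_zero]
    congr 1
    apply NNReal.coe_injective
    push_cast
    rw [Real.coe_toNNReal _ hh.le, Real.coe_toNNReal _ (by positivity)]
  -- law of the partial sums
  have hSlaw : ∀ n, Measure.map (S n) P
      = gaussianReal 0 (∑ k ∈ Finset.range n, (Real.exp (θ * k * h)) ^ 2 * h).toNNReal := by
    intro n
    induction n with
    | zero =>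
        have : S 0 = fun _ => (0 : ℝ) := by
          funext ω; rw [hSapp]; simp
        rw [this, Measure.map_const]
        simp [gaussianReal_zero_var]
    | succ n ih =>
        have hS1 : S (n + 1) = fun ω => S n ω + η n ω := by
          funext ω
          rw [hSapp, hSapp, Finset.sum_range_succ, hη_def]
        have hind : IndepFun (S n) (η n) P := by
          rw [hS_def]
          exact hηindep.indepFun_sum_range_succ hηmeas n
        rw [hS1, indepFun_map_add_conv (hSmeas n) (hηmeas n) hind, ih, hηlaw n,
          _root_.gaussianReal_conv_gaussianReal, add_zero]
        congr 1
        rw [Finset.sum_range_succ, Real.toNNReal_add (by positivity) (by positivity)]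
  -- representation of the chains as affine functions of the partial sums
  have hrep : ∀ (c : ℝ) (Z : ℕ → Ω → ℝ), (∀ ω, Z 0 ω = x₀) →
      (∀ k ω, Z (k + 1) ω = μ + Real.exp (-θ * h) * (Z k ω - μ) + c * ξ k ω) →
      ∀ n ω, Z n ω = (Real.exp (-θ * n * h) * x₀ + μ * (1 - Real.exp (-θ * n * h)))
        + c * Real.exp (θ * h - θ * n * h) * S n ω := by
    intro c Z hZ0 hZstep n
    induction n with
    | zero =>
        intro ω
        have : S 0 ω = 0 := by rw [hSapp]; simp
        rw [hZ0 ω, this]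
        norm_num
    | succ n ih =>
        intro ω
        have hS1 : S (n + 1) ω = S n ω + Real.exp (θ * n * h) * ξ n ω := by
          rw [hSapp, hSapp, Finset.sum_range_succ, hη_def]
        rw [hZstep n ω, ih ω, hS1]
        push_cast
        have e1 : Real.exp (-θ * (↑n + 1) * h) = Real.exp (-θ * ↑n * h) * Real.exp (-θ * h) := by
          rw [← Real.exp_add]; congr 1; ring
        have e2 : Real.exp (θ * h - θ * (↑n + 1) * h) = Real.exp (-θ * ↑n * h) := by
          congr 1; ring
        have e3 : Real.exp (θ * h - θ * ↑n * h) = Real.exp (-θ * ↑n * h) * Real.exp (θ * h) := by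
          rw [← Real.exp_add]; congr 1; ring
        have e4 : Real.exp (-θ * ↑n * h) * Real.exp (θ * ↑n * h) = 1 := by
          rw [← Real.exp_add, ← Real.exp_zero]; congr 1; ring
        have e5 : Real.exp (-θ * h) * Real.exp (θ * h) = 1 := by
          rw [← Real.exp_add, ← Real.exp_zero]; congr 1; ring
        rw [e1, e2, e3]
        linear_combination (c * Real.exp (-θ * ↑n * h) * S n ω) * e5 - (c * ξ n ω) * e4
  -- variance identity
  have hr1 : (1:ℝ) < Real.exp (2 * θ * h) := by
    rw [show (1:ℝ) = Real.exp 0 from (Real.exp_zero).symm]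
    exact Real.exp_lt_exp.mpr (by positivity)
  have hr0 : Real.exp (2 * θ * h) ≠ 0 := (Real.exp_pos _).ne'
  have hvar : ∀ n : ℕ, (Real.exp (θ * h - θ * n * h))^2
      * (∑ k ∈ Finset.range n, (Real.exp (θ * k * h)) ^ 2 * h)
      = h * (1 - Real.exp (-2 * θ * n * h)) / (1 - Real.exp (-2 * θ * h)) := by
    intro n
    have hterm : ∀ k : ℕ, (Real.exp (θ * k * h)) ^ 2 * h = (Real.exp (2 * θ * h)) ^ k * h := by
      intro k
      rw [sq, ← Real.exp_add, ← Real.exp_nat_mul]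
      congr 2
      ring
    have hsum : ∑ k ∈ Finset.range n, (Real.exp (θ * k * h)) ^ 2 * h
        = (Real.exp (2 * θ * h) ^ n - 1) / (Real.exp (2 * θ * h) - 1) * h := by
      simp_rw [hterm]
      rw [← Finset.sum_mul, geom_sum_eq hr1.ne' n]
    have hA : Real.exp (-2 * θ * (n:ℝ) * h) = (Real.exp (2 * θ * h) ^ n)⁻¹ := by
      rw [← Real.exp_nat_mul, ← Real.exp_neg]
      congr 1
      ring
    have hB : Real.exp (-2 * θ * h) = (Real.exp (2 * θ * h))⁻¹ := by
      rw [← Real.exp_neg]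
      congr 1
      ring
    have hC : (Real.exp (θ * h - θ * n * h)) ^ 2
        = Real.exp (2 * θ * h) * (Real.exp (2 * θ * h) ^ n)⁻¹ := by
      rw [sq, ← Real.exp_add, ← Real.exp_nat_mul, ← Real.exp_neg, ← Real.exp_add]
      congr 1
      ring
    rw [hsum, hA, hB, hC]
    have hrn0 : Real.exp (2 * θ * h) ^ n ≠ 0 := pow_ne_zero _ hr0
    have hr1' : Real.exp (2 * θ * h) - 1 ≠ 0 := sub_ne_zero.mpr hr1.ne'
    have h1r : 1 - (Real.exp (2 * θ * h))⁻¹ ≠ 0 := by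
      rw [sub_ne_zero]
      intro hcontra
      apply hr1.ne'
      rw [← inv_inv (Real.exp (2*θ*h)), ← hcontra, inv_one]
    field_simp
  -- nonnegativity facts
  have hden : (0:ℝ) < 1 - Real.exp (-2 * θ * h) := by
    have : Real.exp (-2 * θ * h) < 1 := by
      rw [show (1:ℝ) = Real.exp 0 from (Real.exp_zero).symm]
      apply Real.exp_lt_exp.mpr
      nlinarith
    linarith
  have hnum : ∀ n : ℕ, (0:ℝ) ≤ 1 - Real.exp (-2 * θ * n * h) := by
    intro n
    have : Real.exp (-2 * θ * n * h) ≤ 1 := by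
      apply Real.exp_le_one_iff.mpr
      have h0 : (0:ℝ) ≤ θ * (n:ℝ) * h := by positivity
      nlinarith [h0]
    linarith
  have hSnn : ∀ n : ℕ, (0:ℝ) ≤ ∑ k ∈ Finset.range n, (Real.exp (θ * k * h)) ^ 2 * h :=
    fun n => Finset.sum_nonneg fun k _ => by positivity
  -- the general affine law
  have hlawgen : ∀ (c : ℝ) (Z : ℕ → Ω → ℝ), (∀ ω, Z 0 ω = x₀) →
      (∀ k ω, Z (k + 1) ω = μ + Real.exp (-θ * h) * (Z k ω - μ) + c * ξ k ω) →
      ∀ n : ℕ, Measure.map (Z n) P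
        = gaussianReal (Real.exp (-θ * n * h) * x₀ + μ * (1 - Real.exp (-θ * n * h)))
            ((c ^ 2 * (h * (1 - Real.exp (-2 * θ * n * h)) / (1 - Real.exp (-2 * θ * h)))).toNNReal) := by
    intro c Z hZ0 hZstep n
    have hZn : Z n = (fun s => (Real.exp (-θ * n * h) * x₀ + μ * (1 - Real.exp (-θ * n * h)))
        + (c * Real.exp (θ * h - θ * n * h)) * s) ∘ S n :=
      funext fun ω => hrep c Z hZ0 hZstep n ω
    rw [hZn, ← Measure.map_map (by fun_prop) (hSmeas n), hSlaw n]
    have hcomp : (fun s : ℝ => (Real.exp (-θ * n * h) * x₀ + μ * (1 - Real.exp (-θ * n * h)))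
        + (c * Real.exp (θ * h - θ * n * h)) * s)
        = (fun t : ℝ => (Real.exp (-θ * n * h) * x₀ + μ * (1 - Real.exp (-θ * n * h))) + t)
          ∘ (fun s : ℝ => (c * Real.exp (θ * h - θ * n * h)) * s) := rfl
    rw [hcomp, ← Measure.map_map (measurable_const_add _) (measurable_const_mul _),
      gaussianReal_map_const_mul, gaussianReal_map_const_add]
    rw [mul_zero, zero_add]
    congr 1
    apply NNReal.coe_injective
    push_cast
    rw [Real.coe_toNNReal _ (hSnn n), Real.coe_toNNReal _
      (mul_nonneg (sq_nonneg c) (div_nonneg (mul_nonneg hh.le (hnum n)) hden.le))]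
    have := hvar n
    rw [mul_pow]
    nlinarith [hvar n, sq_nonneg c]
  -- conclude
  intro n _hn
  constructor
  · rw [hlawgen (Real.sqrt (2 * θ)) X hX0 hXstep n]
    congr 1
    have hc2 : (Real.sqrt (2 * θ)) ^ 2 = 2 * θ := Real.sq_sqrt (by positivity)
    rw [hc2]
    congr 1
    ring
  · rw [hlawgen (Real.sqrt (2 * θ) * Real.exp (-θ * h / 2)) Y hY0 hYstep n]
    congr 1
    have hc2 : (Real.sqrt (2 * θ) * Real.exp (-θ * h / 2)) ^ 2 = 2 * θ * Real.exp (-θ * h) := by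
      rw [mul_pow, Real.sq_sqrt (by positivity), sq, ← Real.exp_add]
      congr 2
      ring
    rw [hc2]
    congr 1
    ring
end

section
/- For every u > 0: (i) 2u·e^{−u} < 1 − e^{−2u} < 2u, and (ii) 2u − (1 − e^{−2u}) > (1 − e^{−2u}) − 2u·e^{−u}. Interpreting u = θh, this says that the one-step noise variance 2θh of the LT scheme for the Ornstein–Uhlenbeck process strictly overestimates the true one-step variance 1 − e^{−2θh}, the Strang one-step noise variance 2θh·e^{−θh} strictly underestimates it, and the absolute variance bias of the Strang scheme is strictly smaller than that of the LT scheme, for every step size h > 0. -/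
/-- For every `u > 0`: the Lie–Trotter one-step noise variance `2u` strictly
overestimates the exact Ornstein–Uhlenbeck one-step variance `1 − e^{−2u}`, the
Strang noise variance `2u e^{−u}` strictly underestimates it, and the absolute
variance bias of Strang is strictly smaller than that of Lie–Trotter. -/
theorem ou_variance_bias (u : ℝ) (hu : 0 < u) :
    2 * u * Real.exp (-u) < 1 - Real.exp (-2 * u)
      ∧ 1 - Real.exp (-2 * u) < 2 * u
      ∧ (1 - Real.exp (-2 * u)) - 2 * u * Real.exp (-u)
          < 2 * u - (1 - Real.exp (-2 * u)) := by
  have hx : (0:ℝ) < Real.exp (-u) := Real.exp_pos _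
  have hsinh : u < Real.sinh u := Real.self_lt_sinh_iff.mpr hu
  have hsinh' : 2 * u < Real.exp u - Real.exp (-u) := by
    rw [Real.sinh_eq] at hsinh; linarith
  have h2 : Real.exp (-2 * u) = Real.exp (-u) * Real.exp (-u) := by
    rw [← Real.exp_add]; ring_nf
  have hee : Real.exp u * Real.exp (-u) = 1 := by
    rw [← Real.exp_add]; simp
  have h1 : 2 * u * Real.exp (-u) < 1 - Real.exp (-2 * u) := by
    have := mul_lt_mul_of_pos_right hsinh' hx
    rw [sub_mul, hee] at this
    rw [h2]; linarith
  have hlin : -2 * u + 1 < Real.exp (-2 * u) := by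
    have := Real.add_one_lt_exp (x := -2 * u) (by linarith)
    linarith
  have h2' : 1 - Real.exp (-2 * u) < 2 * u := by linarith
  have hlin1 : -u + 1 < Real.exp (-u) := by
    have := Real.add_one_lt_exp (x := -u) (by linarith)
    linarith
  have h3 : (1 - Real.exp (-2 * u)) - 2 * u * Real.exp (-u)
      < 2 * u - (1 - Real.exp (-2 * u)) := by
    -- 2(1 - e^{-2u}) < 2u(1 + e^{-u}); note 1 - e^{-2u} = (1-e^{-u})(1+e^{-u})
    have hfac : 1 - Real.exp (-2 * u)
        = (1 - Real.exp (-u)) * (1 + Real.exp (-u)) := by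
      rw [h2]; ring
    have hpos : (0:ℝ) < 1 + Real.exp (-u) := by linarith
    have : (1 - Real.exp (-u)) * (1 + Real.exp (-u)) < u * (1 + Real.exp (-u)) :=
      mul_lt_mul_of_pos_right (by linarith) hpos
    rw [← hfac] at this
    nlinarith
  exact ⟨h1, h2', h3⟩
end

section
/- Let q > 1 and b ≥ 0 be constants, and let u, a : [0,∞) → [0,∞) be continuous functions such that u(t) ≤ a(t) + b·∫₀ᵗ u(s)^q ds for all t ≥ 0. Define κ(t) = 2^{q−1}·b·∫₀ᵗ a(s)^q ds. Then for every t ≥ 0 such that κ(t) > 0 and κ(t)^{1−q} − (q−1)·2^{q−1}·b·t > 0, one has u(t) ≤ a(t) + (κ(t)^{1−q} − (q−1)·2^{q−1}·b·t)^{1/(1−q)}. -/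
set_option maxHeartbeats 1000000

open Set

lemma aux_add_rpow_le {x y q : ℝ} (hx : 0 ≤ x) (hy : 0 ≤ y) (hq : 1 ≤ q) :
    (x + y) ^ q ≤ 2 ^ (q - 1) * (x ^ q + y ^ q) := by
  lift x to NNReal using hx
  lift y to NNReal using hy
  exact_mod_cast NNReal.rpow_add_le_mul_rpow_add_rpow x y hq

/-- Generalized (nonlinear) Gronwall inequality with superlinear exponent `q > 1`:
if `u(t) ≤ a(t) + b ∫₀ᵗ u(s)^q ds` for all `t ≥ 0`, then, setting
`κ(t) = 2^{q−1} b ∫₀ᵗ a(s)^q ds`, for every `t ≥ 0` with `κ(t) > 0` and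
`κ(t)^{1−q} − (q−1) 2^{q−1} b t > 0`, one has
`u(t) ≤ a(t) + (κ(t)^{1−q} − (q−1) 2^{q−1} b t)^{1/(1−q)}`. -/
theorem nonlinear_gronwall
    (q b : ℝ) (hq : 1 < q) (hb : 0 ≤ b)
    (u a : ℝ → ℝ)
    (hu_cont : ContinuousOn u (Set.Ici 0)) (ha_cont : ContinuousOn a (Set.Ici 0))
    (hu_nonneg : ∀ t, 0 ≤ t → 0 ≤ u t) (ha_nonneg : ∀ t, 0 ≤ t → 0 ≤ a t)
    (hbound : ∀ t, 0 ≤ t → u t ≤ a t + b * ∫ s in (0 : ℝ)..t, u s ^ q) :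
    ∀ t, 0 ≤ t →
      0 < (2 : ℝ) ^ (q - 1) * b * ∫ s in (0 : ℝ)..t, a s ^ q →
      0 < ((2 : ℝ) ^ (q - 1) * b * ∫ s in (0 : ℝ)..t, a s ^ q) ^ (1 - q)
            - (q - 1) * 2 ^ (q - 1) * b * t →
      u t ≤ a t
        + (((2 : ℝ) ^ (q - 1) * b * ∫ s in (0 : ℝ)..t, a s ^ q) ^ (1 - q)
            - (q - 1) * 2 ^ (q - 1) * b * t) ^ (1 / (1 - q)) := by
  intro t₀ ht₀ hK₀ hD₀
  have hq0 : (0 : ℝ) < q := by linarith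
  have h1q : (1 : ℝ) - q < 0 := by linarith
  -- globally continuous extensions
  set U : ℝ → ℝ := fun s => u (max s 0) with hUdef
  set A : ℝ → ℝ := fun s => a (max s 0) with hAdef
  have hmax : ∀ s : ℝ, (0 : ℝ) ≤ max s 0 := fun s => le_max_right _ _
  have hmc : Continuous fun s : ℝ => max s 0 := continuous_id.max continuous_const
  have hUc : Continuous U := hu_cont.comp_continuous hmc fun x => hmax x
  have hAc : Continuous A := ha_cont.comp_continuous hmc fun x => hmax x
  have hU0 : ∀ s, 0 ≤ U s := fun s => hu_nonneg _ (hmax s)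
  have hA0 : ∀ s, 0 ≤ A s := fun s => ha_nonneg _ (hmax s)
  have hUeq : ∀ s, 0 ≤ s → U s = u s := fun s hs => by simp [hUdef, max_eq_left hs]
  have hAeq : ∀ s, 0 ≤ s → A s = a s := fun s hs => by simp [hAdef, max_eq_left hs]
  have hintU : ∀ t, 0 ≤ t → (∫ s in (0 : ℝ)..t, u s ^ q) = ∫ s in (0 : ℝ)..t, U s ^ q := by
    intro t ht
    refine intervalIntegral.integral_congr fun s hs => ?_
    rw [Set.uIcc_of_le ht] at hs
    rw [hUeq s hs.1]
  have hintA : ∀ t, 0 ≤ t → (∫ s in (0 : ℝ)..t, a s ^ q) = ∫ s in (0 : ℝ)..t, A s ^ q := by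
    intro t ht
    refine intervalIntegral.integral_congr fun s hs => ?_
    rw [Set.uIcc_of_le ht] at hs
    rw [hAeq s hs.1]
  set c : ℝ := 2 ^ (q - 1) * b with hcdef
  have h2pos : (0 : ℝ) < 2 ^ (q - 1) := Real.rpow_pos_of_pos (by norm_num) _
  have hc0 : 0 ≤ c := mul_nonneg h2pos.le hb
  set g : ℝ → ℝ := fun s => U s ^ q with hgdef
  have hgc : Continuous g := hUc.rpow_const fun s => Or.inr hq0.le
  have hg0 : ∀ s, 0 ≤ g s := fun s => Real.rpow_nonneg (hU0 s) q
  set v : ℝ → ℝ := fun s => b * ∫ r in (0 : ℝ)..s, g r with hvdef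
  have hvderiv : ∀ s, HasDerivAt v (b * g s) s := fun s =>
    ((hgc.integral_hasStrictDerivAt 0 s).hasDerivAt).const_mul b
  have hvc : Continuous v := continuous_iff_continuousAt.2 fun s => (hvderiv s).continuousAt
  have hv0 : ∀ s, 0 ≤ s → 0 ≤ v s := fun s hs =>
    mul_nonneg hb (intervalIntegral.integral_nonneg hs fun r _ => hg0 r)
  have hAqc : Continuous fun s => A s ^ q := hAc.rpow_const fun s => Or.inr hq0.le
  have hAq0 : ∀ s, 0 ≤ A s ^ q := fun s => Real.rpow_nonneg (hA0 s) q
  set K : ℝ := c * ∫ s in (0 : ℝ)..t₀, A s ^ q with hKdef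
  have hK : 0 < K := by rw [hKdef, ← hintA t₀ ht₀]; exact hK₀
  have hub : ∀ s, 0 ≤ s → U s ≤ A s + v s := by
    intro s hs
    have := hbound s hs
    rw [← hUeq s hs, ← hAeq s hs, hintU s hs] at this
    exact this
  set G : ℝ → ℝ := fun s => v s ^ q with hGdef
  have hGc : Continuous G := hvc.rpow_const fun s => Or.inr hq0.le
  set w : ℝ → ℝ := fun s => K + c * ∫ r in (0 : ℝ)..s, G r with hwdef
  have hwderiv : ∀ s, HasDerivAt w (c * G s) s := fun s =>
    (((hGc.integral_hasStrictDerivAt 0 s).hasDerivAt).const_mul c).const_add K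
  have hwc : Continuous w := continuous_iff_continuousAt.2 fun s => (hwderiv s).continuousAt
  have hG0 : ∀ s, 0 ≤ s → 0 ≤ G s := fun s hs => Real.rpow_nonneg (hv0 s hs) q
  have hwK : ∀ s, 0 ≤ s → K ≤ w s := by
    intro s hs
    have : 0 ≤ c * ∫ r in (0 : ℝ)..s, G r :=
      mul_nonneg hc0 (intervalIntegral.integral_nonneg hs fun r hr => hG0 r hr.1)
    simp only [hwdef]; linarith
  have hwpos : ∀ s, 0 ≤ s → 0 < w s := fun s hs => lt_of_lt_of_le hK (hwK s hs)
  -- v ≤ w on [0, t₀]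
  have hvw : ∀ s ∈ Icc (0 : ℝ) t₀, v s ≤ w s := by
    intro s hs
    obtain ⟨hs0, hst⟩ := hs
    have hpt : ∀ r ∈ Icc (0 : ℝ) s, b * g r ≤ c * A r ^ q + c * G r := by
      intro r hr
      have h1 : g r ≤ (A r + v r) ^ q :=
        Real.rpow_le_rpow (hU0 r) (hub r hr.1) hq0.le
      have h2 : (A r + v r) ^ q ≤ 2 ^ (q - 1) * (A r ^ q + v r ^ q) :=
        aux_add_rpow_le (hA0 r) (hv0 r hr.1) hq.le
      have h3 : b * g r ≤ b * (2 ^ (q - 1) * (A r ^ q + v r ^ q)) :=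
        mul_le_mul_of_nonneg_left (h1.trans h2) hb
      calc b * g r ≤ b * (2 ^ (q - 1) * (A r ^ q + v r ^ q)) := h3
        _ = c * A r ^ q + c * G r := by rw [hcdef, hGdef]; ring
    have hint1 : (∫ r in (0 : ℝ)..s, b * g r) ≤ ∫ r in (0 : ℝ)..s, (c * A r ^ q + c * G r) := by
      refine intervalIntegral.integral_mono_on hs0 ?_ ?_ hpt
      · exact (continuous_const.mul hgc).intervalIntegrable _ _
      · exact ((continuous_const.mul hAqc).add (continuous_const.mul hGc)).intervalIntegrable _ _
    have hvs : v s = ∫ r in (0 : ℝ)..s, b * g r := by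
      rw [hvdef]; simp [intervalIntegral.integral_const_mul]
    have hsplit : (∫ r in (0 : ℝ)..s, (c * A r ^ q + c * G r))
        = c * (∫ r in (0 : ℝ)..s, A r ^ q) + c * ∫ r in (0 : ℝ)..s, G r := by
      rw [intervalIntegral.integral_add (f := fun r => c * A r ^ q) (g := fun r => c * G r)
        ((continuous_const.mul hAqc).intervalIntegrable _ _)
        ((continuous_const.mul hGc).intervalIntegrable _ _),
        intervalIntegral.integral_const_mul, intervalIntegral.integral_const_mul]
    have hκ : c * (∫ r in (0 : ℝ)..s, A r ^ q) ≤ K := by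
      rw [hKdef]
      refine mul_le_mul_of_nonneg_left ?_ hc0
      refine intervalIntegral.integral_mono_interval le_rfl hs0 hst ?_
        (hAqc.intervalIntegrable _ _)
      exact Filter.Eventually.of_forall fun r => hAq0 r
    rw [hvs]
    calc (∫ r in (0 : ℝ)..s, b * g r)
        ≤ c * (∫ r in (0 : ℝ)..s, A r ^ q) + c * ∫ r in (0 : ℝ)..s, G r := by
          rw [← hsplit]; exact hint1
      _ ≤ K + c * ∫ r in (0 : ℝ)..s, G r := by linarith
      _ = w s := rfl
  -- the function F
  set F : ℝ → ℝ := fun s => w s ^ (1 - q) + (q - 1) * c * s with hFdef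
  have hFmono : MonotoneOn F (Icc 0 t₀) := by
    refine monotoneOn_of_deriv_nonneg (convex_Icc 0 t₀) ?_ ?_ ?_
    · refine ContinuousOn.add ?_ ((continuous_const.mul continuous_id).continuousOn)
      exact ContinuousOn.rpow_const hwc.continuousOn fun x hx =>
        Or.inl (hwpos x hx.1).ne'
    · intro x hx
      rw [interior_Icc] at hx
      have h1 : HasDerivAt (fun s => w s ^ (1 - q))
          (c * G x * (1 - q) * w x ^ (1 - q - 1)) x :=
        (hwderiv x).rpow_const (Or.inl (hwpos x hx.1.le).ne')
      have h2 : HasDerivAt (fun s => (q - 1) * c * s) ((q - 1) * c) x := by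
        simpa using (hasDerivAt_id x).const_mul ((q - 1) * c)
      exact ((h1.add h2).differentiableAt).differentiableWithinAt
    · intro x hx
      rw [interior_Icc] at hx
      have hwx : 0 < w x := hwpos x hx.1.le
      have h1 : HasDerivAt (fun s => w s ^ (1 - q))
          (c * G x * (1 - q) * w x ^ (1 - q - 1)) x :=
        (hwderiv x).rpow_const (Or.inl hwx.ne')
      have h2 : HasDerivAt (fun s => (q - 1) * c * s) ((q - 1) * c) x := by
        simpa using (hasDerivAt_id x).const_mul ((q - 1) * c)
      have hF : HasDerivAt F (c * G x * (1 - q) * w x ^ (1 - q - 1) + (q - 1) * c) x :=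
        h1.add h2
      rw [hF.deriv]
      set W : ℝ := w x ^ (1 - q - 1) with hWdef
      have hW : 0 < W := Real.rpow_pos_of_pos hwx _
      have hGw : G x ≤ w x ^ q :=
        Real.rpow_le_rpow (hv0 x hx.1.le) (hvw x ⟨hx.1.le, hx.2.le⟩) hq0.le
      have hwqW : w x ^ q * W = 1 := by
        rw [hWdef, ← Real.rpow_add hwx]
        norm_num
      have hGW : G x * W ≤ 1 := by
        calc G x * W ≤ w x ^ q * W := mul_le_mul_of_nonneg_right hGw hW.le
          _ = 1 := hwqW
      have : c * G x * (1 - q) * W + (q - 1) * c = (q - 1) * c * (1 - G x * W) := by ring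
      rw [this]
      have := mul_nonneg (mul_nonneg (by linarith : (0:ℝ) ≤ q - 1) hc0)
        (by linarith : (0:ℝ) ≤ 1 - G x * W)
      linarith
  have hF0 : F 0 = K ^ (1 - q) := by
    simp [hFdef, hwdef, intervalIntegral.integral_same]
  have hFt : F 0 ≤ F t₀ := hFmono ⟨le_rfl, ht₀⟩ ⟨ht₀, le_rfl⟩ ht₀
  set D : ℝ := K ^ (1 - q) - (q - 1) * c * t₀ with hDdef
  have hDpos : 0 < D := by
    have : (q - 1) * 2 ^ (q - 1) * b * t₀ = (q - 1) * c * t₀ := by rw [hcdef]; ring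
    rw [hDdef, hKdef, ← hintA t₀ ht₀, ← this]
    exact hD₀
  have hDle : D ≤ w t₀ ^ (1 - q) := by
    have := hFt
    rw [hF0] at this
    simp only [hFdef] at this
    rw [hDdef]; linarith
  have hwt : w t₀ ≤ D ^ (1 / (1 - q)) := by
    have h1 : (w t₀ ^ (1 - q)) ^ (1 / (1 - q)) ≤ D ^ (1 / (1 - q)) :=
      Real.rpow_le_rpow_of_nonpos hDpos hDle
        (by rw [one_div]; exact (inv_nonpos.2 h1q.le))
    have h2 : (w t₀ ^ (1 - q)) ^ (1 / (1 - q)) = w t₀ := by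
      rw [one_div]
      exact Real.rpow_rpow_inv (hwpos t₀ ht₀).le h1q.ne
    linarith [h2 ▸ h1]
  -- conclude
  have hu : u t₀ ≤ a t₀ + v t₀ := by
    have := hbound t₀ ht₀
    rw [hintU t₀ ht₀] at this
    exact this
  have hv_final : v t₀ ≤ D ^ (1 / (1 - q)) := (hvw t₀ ⟨ht₀, le_rfl⟩).trans hwt
  have hgoal : (((2 : ℝ) ^ (q - 1) * b * ∫ s in (0 : ℝ)..t₀, a s ^ q) ^ (1 - q)
      - (q - 1) * 2 ^ (q - 1) * b * t₀) = D := by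
    rw [hDdef, hKdef, hintA t₀ ht₀, hcdef]; ring_nf
  rw [hgoal]
  linarith
end

section
/- Let f : ℝ → ℝ be twice continuously differentiable with |f(z)| ≤ M₀, |f'(z)| ≤ M₁ and |f''(z)| ≤ M₂ for all z ∈ ℝ, and let x : [0,T] → ℝ be differentiable with x'(t) = f(x(t)) for all t ∈ [0,T]. Then for every t ∈ [0,T]: |x(t) − x(0) − t·f(x(0)) − (t²/2)·f(x(0))·f'(x(0))| ≤ M₀·(M₀M₂ + M₁²)·t³/6. -/
lemma ode_taylor_aux {T : ℝ} {g g' B B' : ℝ → ℝ}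
    (hg : ∀ t ∈ Set.Icc (0:ℝ) T, HasDerivWithinAt g (g' t) (Set.Icc (0:ℝ) T) t)
    (hB : ∀ t ∈ Set.Icc (0:ℝ) T, HasDerivWithinAt B (B' t) (Set.Icc (0:ℝ) T) t)
    (hbound : ∀ t ∈ Set.Icc (0:ℝ) T, |g' t| ≤ B' t)
    (hg0 : g 0 = 0) (hB0 : B 0 = 0) :
    ∀ t ∈ Set.Icc (0:ℝ) T, |g t| ≤ B t := by
  intro t ht
  have h0 : (0:ℝ) ∈ Set.Icc (0:ℝ) T := ⟨le_refl _, ht.1.trans ht.2⟩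
  have hconv : Convex ℝ (Set.Icc (0:ℝ) T) := convex_Icc _ _
  have mono1 : MonotoneOn (fun s => B s - g s) (Set.Icc (0:ℝ) T) := by
    apply monotoneOn_of_hasDerivWithinAt_nonneg hconv (f' := fun s => B' s - g' s)
    · intro s hs
      exact ((hB s hs).sub (hg s hs)).continuousWithinAt
    · intro s hs
      exact (((hB s (interior_subset hs)).sub (hg s (interior_subset hs))).mono interior_subset)
    · intro s hs
      have := abs_le.mp ((hbound s (interior_subset hs)))
      linarith [this.2]
  have mono2 : MonotoneOn (fun s => B s + g s) (Set.Icc (0:ℝ) T) := by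
    apply monotoneOn_of_hasDerivWithinAt_nonneg hconv (f' := fun s => B' s + g' s)
    · intro s hs
      exact ((hB s hs).add (hg s hs)).continuousWithinAt
    · intro s hs
      exact (((hB s (interior_subset hs)).add (hg s (interior_subset hs))).mono interior_subset)
    · intro s hs
      have := abs_le.mp ((hbound s (interior_subset hs)))
      linarith [this.1]
  have h1 := mono1 h0 ht ht.1
  have h2 := mono2 h0 ht ht.1
  simp only [hg0, hB0] at h1 h2
  rw [abs_le]
  constructor <;> linarith

/-- Second-order Taylor expansion of the flow of the ODE `x' = f(x)` with explicit
remainder bound: if `|f| ≤ M₀`, `|f'| ≤ M₁`, `|f''| ≤ M₂`, then for `t ∈ [0,T]`,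
`|x(t) − x(0) − t f(x(0)) − (t²/2) f(x(0)) f'(x(0))| ≤ M₀(M₀M₂ + M₁²) t³/6`. -/
theorem ode_flow_taylor_expansion
    (f : ℝ → ℝ) (M₀ M₁ M₂ T : ℝ)
    (hf : ContDiff ℝ 2 f)
    (hf0 : ∀ z, |f z| ≤ M₀)
    (hf1 : ∀ z, |deriv f z| ≤ M₁)
    (hf2 : ∀ z, |iteratedDeriv 2 f z| ≤ M₂)
    (x : ℝ → ℝ)
    (hx : ∀ t ∈ Set.Icc (0 : ℝ) T, HasDerivWithinAt x (f (x t)) (Set.Icc (0 : ℝ) T) t) :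
    ∀ t ∈ Set.Icc (0 : ℝ) T,
      |x t - x 0 - t * f (x 0) - (t ^ 2 / 2) * f (x 0) * deriv f (x 0)|
        ≤ M₀ * (M₀ * M₂ + M₁ ^ 2) * t ^ 3 / 6 := by
  set C : ℝ := M₀ * (M₀ * M₂ + M₁ ^ 2) with hCdef
  set s : Set ℝ := Set.Icc (0:ℝ) T with hsdef
  have hM0 : 0 ≤ M₀ := (abs_nonneg _).trans (hf0 0)
  have hM1 : 0 ≤ M₁ := (abs_nonneg _).trans (hf1 0)
  have hM2 : 0 ≤ M₂ := (abs_nonneg _).trans (hf2 0)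
  have hfd : Differentiable ℝ f := hf.differentiable (by norm_num)
  have hf1' : ContDiff ℝ 1 (deriv f) := by
    rw [show (2 : WithTop ℕ∞) = 1 + 1 from by norm_num] at hf
    exact (contDiff_succ_iff_deriv.mp hf).2.2
  have hfd' : Differentiable ℝ (deriv f) := hf1'.differentiable one_ne_zero
  have hderiv2 : ∀ z : ℝ, HasDerivAt (deriv f) (iteratedDeriv 2 f z) z := by
    intro z
    have : iteratedDeriv 2 f = deriv (deriv f) := by
      rw [iteratedDeriv_succ, iteratedDeriv_one]
    rw [this]
    exact (hfd' z).hasDerivAt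
  -- derivative of f ∘ x
  have hcomp : ∀ t ∈ s, HasDerivWithinAt (fun t => f (x t))
      (deriv f (x t) * f (x t)) s t := fun t ht =>
    (hfd (x t)).hasDerivAt.comp_hasDerivWithinAt t (hx t ht)
  -- derivative of (deriv f) ∘ x
  have hdcomp : ∀ t ∈ s, HasDerivWithinAt (fun t => deriv f (x t))
      (iteratedDeriv 2 f (x t) * f (x t)) s t := fun t ht =>
    (hderiv2 (x t)).comp_hasDerivWithinAt t (hx t ht)
  -- derivative of k t = deriv f (x t) * f (x t)
  have hk : ∀ t ∈ s, HasDerivWithinAt (fun t => deriv f (x t) * f (x t))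
      (iteratedDeriv 2 f (x t) * f (x t) * f (x t)
        + deriv f (x t) * (deriv f (x t) * f (x t))) s t := fun t ht =>
    (hdcomp t ht).mul (hcomp t ht)
  -- bound on the derivative of k
  have hkbound : ∀ t ∈ s,
      |iteratedDeriv 2 f (x t) * f (x t) * f (x t)
        + deriv f (x t) * (deriv f (x t) * f (x t))| ≤ C := by
    intro t _
    have h1 : |iteratedDeriv 2 f (x t) * f (x t) * f (x t)| ≤ M₂ * M₀ * M₀ := by
      rw [abs_mul, abs_mul]
      exact mul_le_mul (mul_le_mul (hf2 _) (hf0 _) (abs_nonneg _) hM2) (hf0 _)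
        (abs_nonneg _) (mul_nonneg hM2 hM0)
    have h2 : |deriv f (x t) * (deriv f (x t) * f (x t))| ≤ M₁ * (M₁ * M₀) := by
      rw [abs_mul, abs_mul]
      exact mul_le_mul (hf1 _) (mul_le_mul (hf1 _) (hf0 _) (abs_nonneg _) hM1)
        (mul_nonneg (abs_nonneg _) (abs_nonneg _)) hM1
    calc |iteratedDeriv 2 f (x t) * f (x t) * f (x t)
          + deriv f (x t) * (deriv f (x t) * f (x t))|
        ≤ |iteratedDeriv 2 f (x t) * f (x t) * f (x t)|
          + |deriv f (x t) * (deriv f (x t) * f (x t))| := abs_add_le _ _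
      _ ≤ M₂ * M₀ * M₀ + M₁ * (M₁ * M₀) := add_le_add h1 h2
      _ = C := by rw [hCdef]; ring
  -- Step A: Lipschitz estimate for k
  have hstepA : ∀ t ∈ s, |deriv f (x t) * f (x t) - deriv f (x 0) * f (x 0)| ≤ C * t := by
    intro t ht
    have h0 : (0:ℝ) ∈ s := ⟨le_refl _, ht.1.trans ht.2⟩
    have := Convex.norm_image_sub_le_of_norm_hasDerivWithin_le
      (f := fun t => deriv f (x t) * f (x t)) hk
      (fun z hz => by simpa [Real.norm_eq_abs] using hkbound z hz)
      (convex_Icc _ _) h0 ht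
    simpa [Real.norm_eq_abs, abs_of_nonneg ht.1] using this
  -- Step B: define G t = f (x t) - f (x 0) - t * (deriv f (x 0) * f (x 0))
  have hG : ∀ t ∈ s, HasDerivWithinAt
      (fun t => f (x t) - f (x 0) - t * (deriv f (x 0) * f (x 0)))
      (deriv f (x t) * f (x t) - deriv f (x 0) * f (x 0)) s t := by
    intro t ht
    have h1 : HasDerivWithinAt (fun t => f (x t) - f (x 0) - t * (deriv f (x 0) * f (x 0))) _ s t :=
      ((hcomp t ht).sub_const (f (x 0))).sub
      ((hasDerivAt_mul_const (deriv f (x 0) * f (x 0))).hasDerivWithinAt (s := s) (x := t))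
    simpa using h1
  have hB2 : ∀ t ∈ s, HasDerivWithinAt (fun t => C * t ^ 2 / 2) (C * t) s t := by
    intro t _
    have h : HasDerivWithinAt (fun t => C * t ^ 2 / 2) _ s t := (((hasDerivAt_pow 2 t).const_mul C).div_const 2).hasDerivWithinAt (s := s)
    convert h using 1
    push_cast
    ring
  have hstepB : ∀ t ∈ s,
      |f (x t) - f (x 0) - t * (deriv f (x 0) * f (x 0))| ≤ C * t ^ 2 / 2 := by
    apply ode_taylor_aux hG hB2 hstepA
    · simp
    · simp
  -- Step C: the main function
  have hB3 : ∀ t ∈ s, HasDerivWithinAt (fun t => C * t ^ 3 / 6) (C * t ^ 2 / 2) s t := by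
    intro t _
    have h : HasDerivWithinAt (fun t => C * t ^ 3 / 6) _ s t := (((hasDerivAt_pow 3 t).const_mul C).div_const 6).hasDerivWithinAt (s := s)
    convert h using 1
    push_cast
    ring
  have hg : ∀ t ∈ s, HasDerivWithinAt
      (fun t => x t - x 0 - t * f (x 0) - (t ^ 2 / 2) * f (x 0) * deriv f (x 0))
      (f (x t) - f (x 0) - t * (deriv f (x 0) * f (x 0))) s t := by
    intro t ht
    have h1 : HasDerivWithinAt
        (fun t => x t - x 0 - t * f (x 0) - (t ^ 2 / 2) * f (x 0) * deriv f (x 0)) _ s t :=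
      (((hx t ht).sub_const (x 0)).sub
      ((hasDerivAt_mul_const (f (x 0))).hasDerivWithinAt (s := s) (x := t))).sub
      (((((hasDerivAt_pow 2 t).div_const 2).mul_const (f (x 0))).mul_const
        (deriv f (x 0))).hasDerivWithinAt (s := s))
    convert h1 using 1
    push_cast
    ring
  have hfinal := ode_taylor_aux hg hB3 hstepB (by simp) (by simp)
  intro t ht
  calc |x t - x 0 - t * f (x 0) - (t ^ 2 / 2) * f (x 0) * deriv f (x 0)|
      ≤ C * t ^ 3 / 6 := hfinal t ht
    _ = M₀ * (M₀ * M₂ + M₁ ^ 2) * t ^ 3 / 6 := by rw [hCdef]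
end

section
/- Let θ > 0, a > 0, μ > 0 and h > 0; set θ̃ = (1+a)θ, μ̃ = μ/(1+a) and σ = √(2θa). Let ξ ~ N(0,h). Then the one-step LT scheme for the inhomogeneous geometric Brownian motion started at x > 0, namely X^{LT} = (μ̃ + e^{−θ̃h}(x − μ̃))·e^{σξ}, satisfies E[X^{LT}] = e^{−θh}x + μ̃(e^{θah} − e^{−θh}). Moreover, for the chain X₀ = x₀ > 0, X_{k+1} = (μ̃ + e^{−θ̃h}(X_k − μ̃))·e^{σξ_k} with i.i.d. ξ_k ~ N(0,h), for every n ≥ 1: E[X_n] = e^{−θnh}x₀ + μ̃(e^{θah} − e^{−θh})·(1 − e^{−θnh})/(1 − e^{−θh}). -/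
open MeasureTheory ProbabilityTheory

open scoped NNReal ENNReal

lemma my_gauss_exp (c : ℝ) {v : ℝ≥0} (hv : v ≠ 0) :
    (∫ z, Real.exp (c * z) ∂(gaussianReal 0 v)) = Real.exp (c ^ 2 * v / 2) ∧
      Integrable (fun z => Real.exp (c * z)) (gaussianReal 0 v) := by
  have hv' : (0 : ℝ) < v := by exact_mod_cast pos_iff_ne_zero.mpr hv
  have hkey : ∀ x : ℝ, gaussianPDFReal 0 v x * Real.exp (c * x)
      = Real.exp (c ^ 2 * v / 2) * gaussianPDFReal (c * v) v x := by
    intro x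
    simp only [gaussianPDFReal]
    have hexp : Real.exp (-(x - 0) ^ 2 / (2 * v)) * Real.exp (c * x)
        = Real.exp (c ^ 2 * v / 2) * Real.exp (-(x - c * v) ^ 2 / (2 * v)) := by
      rw [← Real.exp_add, ← Real.exp_add]
      congr 1
      field_simp
      ring
    rw [mul_assoc, hexp]; ring
  have hfmeas : Measurable fun x => (gaussianPDFReal 0 v x).toNNReal :=
    (measurable_gaussianPDFReal 0 v).real_toNNReal
  have hd : gaussianReal 0 v
      = volume.withDensity fun x => ((gaussianPDFReal 0 v x).toNNReal : ℝ≥0∞) :=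
    gaussianReal_of_var_ne_zero 0 hv
  have hsmul : (fun x => (gaussianPDFReal 0 v x).toNNReal • Real.exp (c * x))
      = fun x => Real.exp (c ^ 2 * v / 2) * gaussianPDFReal (c * v) v x := by
    funext x
    rw [NNReal.smul_def, Real.coe_toNNReal _ (gaussianPDFReal_nonneg 0 v x), smul_eq_mul, hkey x]
  constructor
  · rw [hd, integral_withDensity_eq_integral_smul hfmeas, hsmul, integral_const_mul,
      integral_gaussianPDFReal_eq_one (c * v) hv, mul_one]
  · rw [hd, integrable_withDensity_iff_integrable_smul hfmeas, hsmul]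
    exact (integrable_gaussianPDFReal (c * v) v).const_mul _

/-- One-step and global conditional means of the Lie–Trotter scheme for the
inhomogeneous geometric Brownian motion: with `θ̃ = (1+a)θ`, `μ̃ = μ/(1+a)`,
`σ = √(2θa)` and `ξ ~ N(0,h)`, the one-step scheme
`X^{LT} = (μ̃ + e^{−θ̃h}(x − μ̃)) e^{σξ}` has mean `e^{−θh} x + μ̃(e^{θah} − e^{−θh})`,
and the chain `X₀ = x₀`, `X_{k+1} = (μ̃ + e^{−θ̃h}(X_k − μ̃)) e^{σξ_k}` with i.i.d.
`ξ_k ~ N(0,h)` has mean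
`E[X_n] = e^{−θnh} x₀ + μ̃(e^{θah} − e^{−θh})(1 − e^{−θnh})/(1 − e^{−θh})` for `n ≥ 1`. -/
theorem igbm_LT_means
    {Ω : Type*} [MeasurableSpace Ω] (P : Measure Ω) [IsProbabilityMeasure P]
    (θ a μ h x x₀ : ℝ) (hθ : 0 < θ) (ha : 0 < a) (hμ : 0 < μ) (hh : 0 < h)
    (hx : 0 < x) (hx₀ : 0 < x₀)
    (ξ : ℕ → Ω → ℝ) (hmeas : ∀ k, Measurable (ξ k))
    (hindep : iIndepFun ξ P)
    (hlaw : ∀ k, Measure.map (ξ k) P = gaussianReal 0 h.toNNReal)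
    (X : ℕ → Ω → ℝ)
    (hX0 : ∀ ω, X 0 ω = x₀)
    (hXstep : ∀ k ω, X (k + 1) ω =
      (μ / (1 + a) + Real.exp (-((1 + a) * θ) * h) * (X k ω - μ / (1 + a)))
        * Real.exp (Real.sqrt (2 * θ * a) * ξ k ω)) :
    (∫ z, (μ / (1 + a) + Real.exp (-((1 + a) * θ) * h) * (x - μ / (1 + a)))
            * Real.exp (Real.sqrt (2 * θ * a) * z) ∂(gaussianReal 0 h.toNNReal))
        = Real.exp (-θ * h) * x
          + (μ / (1 + a)) * (Real.exp (θ * a * h) - Real.exp (-θ * h))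
      ∧ ∀ n : ℕ, 1 ≤ n →
          (∫ ω, X n ω ∂P)
            = Real.exp (-θ * n * h) * x₀
              + (μ / (1 + a)) * (Real.exp (θ * a * h) - Real.exp (-θ * h))
                * (1 - Real.exp (-θ * n * h)) / (1 - Real.exp (-θ * h)) := by
  set A := μ / (1 + a) with hA
  set σ := Real.sqrt (2 * θ * a) with hσ
  set E1 := Real.exp (-((1 + a) * θ) * h) with hE1
  set G := Real.exp (θ * a * h) with hG
  set r := Real.exp (-θ * h) with hr
  have hv : h.toNNReal ≠ 0 := by
    simp [Real.toNNReal_eq_zero, not_le, hh]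
  have hvh : ((h.toNNReal : ℝ)) = h := Real.coe_toNNReal h hh.le
  have hσ2 : σ ^ 2 * (h.toNNReal : ℝ) / 2 = θ * a * h := by
    rw [hσ, Real.sq_sqrt (by positivity), hvh]; ring
  obtain ⟨hGint, hGintg⟩ := my_gauss_exp σ hv
  rw [hσ2] at hGint
  have hE1G : E1 * G = r := by
    rw [hE1, hG, hr, ← Real.exp_add]; ring_nf
  -- mean and integrability of exp(σ ξ k)
  have hexpmeas : Measurable fun t : ℝ => Real.exp (σ * t) :=
    Real.measurable_exp.comp (measurable_const_mul σ)
  have hEξ : ∀ k, ∫ ω, Real.exp (σ * ξ k ω) ∂P = G := by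
    intro k
    have : ∫ ω, Real.exp (σ * ξ k ω) ∂P
        = ∫ z, Real.exp (σ * z) ∂(Measure.map (ξ k) P) :=
      (integral_map (hmeas k).aemeasurable hexpmeas.aestronglyMeasurable).symm
    rw [this, hlaw k, hGint, hG]
  have hIξ : ∀ k, Integrable (fun ω => Real.exp (σ * ξ k ω)) P := by
    intro k
    have := hGintg
    rw [← hlaw k, integrable_map_measure hexpmeas.aestronglyMeasurable
      (hmeas k).aemeasurable] at this
    exact this
  -- representation of X k as a measurable function of (ξ i)_{i < k}
  have hrep : ∀ k, ∃ F : ((i : Finset.range k) → ℝ) → ℝ, Measurable F ∧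
      ∀ ω, X k ω = F (fun i => ξ i ω) := by
    intro k
    induction k with
    | zero => exact ⟨fun _ => x₀, measurable_const, fun ω => hX0 ω⟩
    | succ k ih =>
      obtain ⟨F, hF, hFX⟩ := ih
      have hmem : ∀ i : Finset.range k, (i : ℕ) ∈ Finset.range (k + 1) := by
        intro i
        have := Finset.mem_range.mp i.2
        exact Finset.mem_range.mpr (Nat.lt_succ_of_lt this)
      have hkmem : k ∈ Finset.range (k + 1) := Finset.self_mem_range_succ k
      refine ⟨fun y => (A + E1 * (F (fun i => y ⟨i, hmem i⟩) - A))
          * Real.exp (σ * y ⟨k, hkmem⟩), ?_, ?_⟩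
      · have hres : Measurable fun y : (i : Finset.range (k + 1)) → ℝ =>
            (fun i : Finset.range k => y ⟨i, hmem i⟩) :=
          measurable_pi_lambda _ fun i => measurable_pi_apply _
        exact ((measurable_const.add (((hF.comp hres).sub measurable_const).const_mul E1)).mul
          (hexpmeas.comp (measurable_pi_apply _)))
      · intro ω
        rw [hXstep k ω, hFX ω]
  have hXmeas : ∀ k, Measurable (X k) := by
    intro k
    obtain ⟨F, hF, hFX⟩ := hrep k
    have : X k = fun ω => F (fun i => ξ i ω) := funext hFX
    rw [this]
    exact hF.comp (measurable_pi_lambda _ fun i => hmeas i)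
  -- independence of X k and exp(σ ξ k)
  have hind : ∀ k, IndepFun (X k) (fun ω => Real.exp (σ * ξ k ω)) P := by
    intro k
    obtain ⟨F, hF, hFX⟩ := hrep k
    have h1 := hindep.indepFun_finset (Finset.range k) {k}
      (by simp [Finset.disjoint_left]; omega) hmeas
    have h2 := h1.comp hF
      ((hexpmeas.comp (measurable_pi_apply (⟨k, Finset.mem_singleton_self k⟩ :
        ({k} : Finset ℕ)))))
    have hXeq : X k = fun ω => F (fun i => ξ i ω) := funext hFX
    rw [hXeq]
    exact h2
  -- integrability of X k
  have hXeq' : ∀ k, X (k + 1) = fun ω =>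
      A * (1 - E1) * Real.exp (σ * ξ k ω) + E1 * (X k ω * Real.exp (σ * ξ k ω)) := by
    intro k
    funext ω
    rw [hXstep k ω]
    ring
  have hXint : ∀ k, Integrable (X k) P := by
    intro k
    induction k with
    | zero =>
      have : X 0 = fun _ => x₀ := funext hX0
      rw [this]; exact integrable_const x₀
    | succ k ih =>
      rw [hXeq' k]
      exact ((hIξ k).const_mul _).add
        (((hind k).integrable_mul ih (hIξ k)).const_mul E1)
  -- mean recursion
  have hM : ∀ k, ∫ ω, X (k + 1) ω ∂P = r * ∫ ω, X k ω ∂P + A * (G - r) := by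
    intro k
    have h1 : Integrable (fun ω => A * (1 - E1) * Real.exp (σ * ξ k ω)) P :=
      (hIξ k).const_mul _
    have h2 : Integrable (fun ω => E1 * (X k ω * Real.exp (σ * ξ k ω))) P :=
      ((hind k).integrable_mul (hXint k) (hIξ k)).const_mul E1
    have hmul : ∫ ω, X k ω * Real.exp (σ * ξ k ω) ∂P = (∫ ω, X k ω ∂P) * G := by
      have h3 := (hind k).integral_mul_eq_mul_integral (hXint k).aestronglyMeasurable (hIξ k).aestronglyMeasurable
      have h4 : integral P (X k * fun ω => Real.exp (σ * ξ k ω))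
          = ∫ ω, X k ω * Real.exp (σ * ξ k ω) ∂P := rfl
      rw [h4] at h3
      rw [h3, hEξ k]
    rw [hXeq' k, integral_add h1 h2, integral_const_mul, integral_const_mul, hmul, hEξ k]
    linear_combination ((∫ ω, X k ω ∂P) - A) * hE1G
  have hrne : 1 - r ≠ 0 := by
    have : r < 1 := Real.exp_lt_one_iff.mpr (by nlinarith)
    linarith
  have hclosed : ∀ n : ℕ, ∫ ω, X n ω ∂P
      = r ^ n * x₀ + A * (G - r) * (1 - r ^ n) / (1 - r) := by
    intro n
    induction n with
    | zero =>
      have : X 0 = fun _ => x₀ := funext hX0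
      rw [this]
      simp
    | succ n ih =>
      rw [hM n, ih]
      field_simp
      ring
  constructor
  · rw [integral_const_mul, hGint]
    linear_combination (x - A) * hE1G
  · intro n _
    have hrn : Real.exp (-θ * n * h) = r ^ n := by
      rw [hr, ← Real.exp_nat_mul]
      congr 1
      ring
    rw [hclosed n, hrn]
end

section
/- Let θ > 0, −1/2 < a < 0, h > 0 and c ∈ [0,1], and let ξ ~ N(0,h). Then E[sin²((√(−2aθ)/2)·ξ + arcsin(√c))] = e^{aθh}·c + (1 − e^{aθh})/2. Consequently, for μ ∈ (0,1) with min(μ, 1−μ) ≥ −a, setting θ̃ = (1+a)θ and μ̃ = (2μ+a)/(2(1+a)), the one-step LT scheme for the Wright–Fisher diffusion started at x ∈ (0,1) satisfies E[X^{LT}] = e^{−θh}x + μ̃(e^{aθh} − e^{−θh}) + (1 − e^{aθh})/2. -/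
open MeasureTheory ProbabilityTheory Real Complex
open scoped NNReal ENNReal

theorem gauss_cos_vol (v s b : ℝ) (hv : 0 < v) :
    ∫ z : ℝ, Real.exp (-z ^ 2 / (2 * v)) * Real.cos (s * z + b)
      = Real.sqrt (2 * π * v) * (Real.exp (-(s ^ 2 * v) / 2) * Real.cos b) := by
  have hr : (0:ℝ) < (2 * v)⁻¹ := by positivity
  set B : ℂ := ((-(2 * v)⁻¹ : ℝ) : ℂ) with hBdef
  have hBre : B.re < 0 := by simpa [hBdef] using neg_neg_iff_pos.mpr hr
  have hJ := integral_cexp_quadratic hBre ((s : ℂ) * Complex.I) ((b : ℂ) * Complex.I)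
  have hint := integrable_cexp_quadratic' hBre ((s : ℂ) * Complex.I) ((b : ℂ) * Complex.I)
  have hre := integral_re hint
  have hpt : ∀ z : ℝ, RCLike.re (cexp (B * (z:ℂ) ^ 2 + (s:ℂ) * Complex.I * z + (b:ℂ) * Complex.I))
      = Real.exp (-z ^ 2 / (2 * v)) * Real.cos (s * z + b) := by
    intro z
    have hz : B * (z:ℂ) ^ 2 + (s:ℂ) * Complex.I * z + (b:ℂ) * Complex.I
        = ((-z ^ 2 / (2 * v) : ℝ) : ℂ) + ((s * z + b : ℝ) : ℂ) * Complex.I := by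
      push_cast [hBdef]; ring
    rw [hz, RCLike.re_to_complex, Complex.exp_re, Complex.add_re, Complex.add_im,
      Complex.ofReal_re, Complex.ofReal_im, Complex.mul_re, Complex.mul_im,
      Complex.I_re, Complex.I_im, Complex.ofReal_re, Complex.ofReal_im]
    norm_num
  have h1 : ((↑π / -B) : ℂ) = ((2 * π * v : ℝ) : ℂ) := by
    have h : (π / (2 * v)⁻¹ : ℝ) = 2 * π * v := by field_simp
    rw [hBdef, ← Complex.ofReal_neg, neg_neg, ← Complex.ofReal_div, h]
  have h2 : ((↑π / -B) ^ (1 / 2 : ℂ) : ℂ) = ((Real.sqrt (2 * π * v) : ℝ) : ℂ) := by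
    rw [h1, show ((1/2 : ℂ)) = ((1/2 : ℝ) : ℂ) by norm_num,
      ← Complex.ofReal_cpow (by positivity) (1/2 : ℝ), Real.sqrt_eq_rpow]
  have h3 : ((b:ℂ) * Complex.I - ((s:ℂ) * Complex.I) ^ 2 / (4 * B))
      = ((-(s ^ 2 * v) / 2 : ℝ) : ℂ) + ((b : ℝ) : ℂ) * Complex.I := by
    rw [hBdef]
    have hv' : (v : ℂ) ≠ 0 := by exact_mod_cast hv.ne'
    field_simp
    ring_nf
    simp [Complex.I_sq]
    field_simp
    ring
  have hrhsre : (((↑π / -B) ^ (1 / 2 : ℂ) : ℂ) * cexp ((b:ℂ) * Complex.I - ((s:ℂ) * Complex.I) ^ 2 / (4 * B))).re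
      = Real.sqrt (2 * π * v) * (Real.exp (-(s ^ 2 * v) / 2) * Real.cos b) := by
    rw [h2, h3, Complex.re_ofReal_mul, Complex.exp_re, Complex.add_re, Complex.add_im,
      Complex.ofReal_re, Complex.ofReal_im, Complex.mul_re, Complex.mul_im,
      Complex.I_re, Complex.I_im, Complex.ofReal_re, Complex.ofReal_im]
    norm_num
  calc ∫ z : ℝ, Real.exp (-z ^ 2 / (2 * v)) * Real.cos (s * z + b)
      = ∫ z : ℝ, RCLike.re (cexp (B * (z:ℂ) ^ 2 + (s:ℂ) * Complex.I * z + (b:ℂ) * Complex.I)) := by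
        exact (integral_congr_ae (Filter.Eventually.of_forall fun z => (hpt z).symm))
    _ = RCLike.re (∫ z : ℝ, cexp (B * (z:ℂ) ^ 2 + (s:ℂ) * Complex.I * z + (b:ℂ) * Complex.I)) := hre
    _ = _ := by rw [hJ]; exact hrhsre

theorem gauss_cos (v s b : ℝ) (hv : 0 < v) :
    ∫ z, Real.cos (s * z + b) ∂(gaussianReal 0 v.toNNReal)
      = Real.exp (-(s ^ 2 * v) / 2) * Real.cos b := by
  have hvne : v.toNNReal ≠ 0 := by
    simp [Real.toNNReal_eq_zero, not_le, hv]
  have hvv : ((v.toNNReal : ℝ≥0) : ℝ) = v := Real.coe_toNNReal v hv.le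
  rw [gaussianReal_of_var_ne_zero _ hvne]
  rw [show gaussianPDF 0 v.toNNReal
      = fun x => (((gaussianPDFReal 0 v.toNNReal x).toNNReal : ℝ≥0) : ℝ≥0∞) from rfl]
  rw [integral_withDensity_eq_integral_smul
    ((measurable_gaussianPDFReal 0 v.toNNReal).real_toNNReal) _]
  have hpos : (0:ℝ) < Real.sqrt (2 * π * v) := Real.sqrt_pos.mpr (by positivity)
  have hptw : ∀ z : ℝ, ((gaussianPDFReal 0 v.toNNReal z).toNNReal : ℝ≥0) • Real.cos (s * z + b)
      = (Real.sqrt (2 * π * v))⁻¹ * (Real.exp (-z ^ 2 / (2 * v)) * Real.cos (s * z + b)) := by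
    intro z
    rw [NNReal.smul_def, Real.coe_toNNReal _ (gaussianPDFReal_nonneg _ _ _)]
    simp only [gaussianPDFReal, hvv, sub_zero, smul_eq_mul]
    ring
  rw [integral_congr_ae (Filter.Eventually.of_forall hptw), integral_const_mul,
    gauss_cos_vol v s b hv]
  field_simp

theorem gauss_sin_sq (v s b : ℝ) (hv : 0 < v) :
    ∫ z, Real.sin (s * z + b) ^ 2 ∂(gaussianReal 0 v.toNNReal)
      = 1 / 2 - Real.exp (-(2 * s ^ 2 * v)) * Real.cos (2 * b) / 2 := by
  have hcos : Integrable (fun z => Real.cos (2 * s * z + 2 * b)) (gaussianReal 0 v.toNNReal) := by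
    refine Integrable.mono' (integrable_const 1)
      ((Real.continuous_cos.comp (by continuity)).aestronglyMeasurable)
      (Filter.Eventually.of_forall fun z => ?_)
    simpa using Real.abs_cos_le_one _
  have heq : ∀ z : ℝ, Real.sin (s * z + b) ^ 2
      = 1 / 2 - Real.cos (2 * s * z + 2 * b) / 2 := by
    intro z
    rw [Real.sin_sq_eq_half_sub, show 2 * (s * z + b) = 2 * s * z + 2 * b from by ring]
  rw [integral_congr_ae (Filter.Eventually.of_forall heq),
    integral_sub (integrable_const _) (hcos.div_const 2), integral_const, integral_div,
    gauss_cos v (2 * s) (2 * b) hv, show -((2 * s) ^ 2 * v) / 2 = -(2 * s ^ 2 * v) from by ring]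
  simp

theorem gauss_part1 (θ a h c : ℝ) (hθ : 0 < θ) (ha2 : a < 0) (hh : 0 < h)
    (hc0 : 0 ≤ c) (hc1 : c ≤ 1) :
    (∫ z, Real.sin (Real.sqrt (-2 * a * θ) / 2 * z + Real.arcsin (Real.sqrt c)) ^ 2
        ∂(gaussianReal 0 h.toNNReal))
      = Real.exp (a * θ * h) * c + (1 - Real.exp (a * θ * h)) / 2 := by
  rw [gauss_sin_sq h (Real.sqrt (-2 * a * θ) / 2) (Real.arcsin (Real.sqrt c)) hh]
  have h1 : (Real.sqrt (-2 * a * θ) / 2) ^ 2 = -2 * a * θ / 4 := by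
    rw [div_pow, Real.sq_sqrt (by nlinarith : (0:ℝ) ≤ -2 * a * θ)]
    norm_num
  have h2 : -(2 * (Real.sqrt (-2 * a * θ) / 2) ^ 2 * h) = a * θ * h := by rw [h1]; ring
  have h3 : Real.cos (2 * Real.arcsin (Real.sqrt c)) = 1 - 2 * c := by
    rw [Real.cos_two_mul, Real.cos_arcsin, Real.sq_sqrt hc0,
      Real.sq_sqrt (by linarith : (0:ℝ) ≤ 1 - c)]
    ring
  rw [h2, h3]
  ring

/-- One-step conditional mean of the Lie–Trotter scheme for the Wright–Fisher
diffusion: for `ξ ~ N(0,h)` and `c ∈ [0,1]`,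
`E[sin²((√(−2aθ)/2) ξ + arcsin √c)] = e^{aθh} c + (1 − e^{aθh})/2`; consequently,
with `θ̃ = (1+a)θ` and `μ̃ = (2μ+a)/(2(1+a))`, the LT scheme started at `x ∈ (0,1)`
has mean `e^{−θh} x + μ̃(e^{aθh} − e^{−θh}) + (1 − e^{aθh})/2`. -/
theorem wf_LT_one_step_mean
    (θ a h c μ x : ℝ) (hθ : 0 < θ) (ha1 : -(1 / 2) < a) (ha2 : a < 0) (hh : 0 < h)
    (hc : c ∈ Set.Icc (0 : ℝ) 1)
    (hμ0 : 0 < μ) (hμ1 : μ < 1) (hμa : -a ≤ μ) (hμa' : -a ≤ 1 - μ)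
    (hx : x ∈ Set.Ioo (0 : ℝ) 1) :
    (∫ z, Real.sin (Real.sqrt (-2 * a * θ) / 2 * z + Real.arcsin (Real.sqrt c)) ^ 2
          ∂(gaussianReal 0 h.toNNReal))
        = Real.exp (a * θ * h) * c + (1 - Real.exp (a * θ * h)) / 2
      ∧ (∫ z, Real.sin (Real.sqrt (-2 * a * θ) / 2 * z
              + Real.arcsin (Real.sqrt
                  ((2 * μ + a) / (2 * (1 + a))
                    + Real.exp (-((1 + a) * θ) * h)
                      * (x - (2 * μ + a) / (2 * (1 + a)))))) ^ 2
            ∂(gaussianReal 0 h.toNNReal))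
          = Real.exp (-θ * h) * x
            + ((2 * μ + a) / (2 * (1 + a)))
                * (Real.exp (a * θ * h) - Real.exp (-θ * h))
            + (1 - Real.exp (a * θ * h)) / 2 := by
  obtain ⟨hc0, hc1⟩ := hc
  obtain ⟨hx0, hx1⟩ := hx
  refine ⟨gauss_part1 θ a h c hθ ha2 hh hc0 hc1, ?_⟩
  have ha' : (0:ℝ) < 1 + a := by linarith
  set m : ℝ := (2 * μ + a) / (2 * (1 + a)) with hmdef
  set t : ℝ := Real.exp (-((1 + a) * θ) * h) with htdef
  have hm0 : 0 ≤ m := by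
    apply div_nonneg _ (by linarith)
    linarith
  have hm1 : m ≤ 1 := by
    rw [hmdef, div_le_one (by linarith)]
    linarith
  have ht0 : 0 < t := Real.exp_pos _
  have ht1 : t < 1 := by
    rw [htdef]
    have : -((1 + a) * θ) * h < 0 := by nlinarith [mul_pos (mul_pos ha' hθ) hh]
    calc Real.exp (-((1 + a) * θ) * h) < Real.exp 0 := Real.exp_lt_exp.mpr this
      _ = 1 := Real.exp_zero
  have hc'0 : 0 ≤ m + t * (x - m) := by nlinarith
  have hc'1 : m + t * (x - m) ≤ 1 := by nlinarith
  rw [gauss_part1 θ a h (m + t * (x - m)) hθ ha2 hh hc'0 hc'1]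
  have hexp : Real.exp (a * θ * h) * Real.exp (-((1 + a) * θ) * h) = Real.exp (-θ * h) := by
    rw [← Real.exp_add]
    congr 1
    ring
  rw [htdef]
  linear_combination (x - m) * hexp
end

section
/- Let θ > 0, a > 0, h > 0 and c ∈ ℝ, and let ξ ~ N(0,h). Then E[sinh(√(2θa)·ξ + arcsinh(c))] = c·e^{θah}. Consequently, setting θ̃ = (1+a)θ and μ̃ = μ/(1+a), the one-step LT scheme for the Student diffusion started at x ∈ ℝ, namely X^{LT} = sinh(√(2θa)·ξ + arcsinh(μ̃ + e^{−θ̃h}(x − μ̃))), satisfies E[X^{LT}] = e^{−θh}x + μ̃(e^{θah} − e^{−θh}). -/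
open MeasureTheory ProbabilityTheory
open scoped NNReal ENNReal

lemma gauss_exp_mul_pdf (v : NNReal) (hv : 0 < (v : ℝ)) (t x : ℝ) :
    Real.exp (t * x) * gaussianPDFReal 0 v x
      = Real.exp (t ^ 2 * v / 2) * gaussianPDFReal (t * v) v x := by
  unfold gaussianPDFReal
  rw [mul_left_comm, ← Real.exp_add, mul_left_comm, ← Real.exp_add]
  congr 1
  field_simp
  ring

lemma gauss_sinh_integral (v : NNReal) (hv : 0 < (v : ℝ)) (σ b : ℝ) :
    ∫ z, Real.sinh (σ * z + b) ∂(gaussianReal 0 v)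
      = Real.sinh b * Real.exp (σ ^ 2 * v / 2) := by
  have hvne : v ≠ 0 := by
    intro hz; rw [hz] at hv; simp at hv
  rw [gaussianReal_of_var_ne_zero _ hvne]
  have hd : gaussianPDF 0 v
      = fun x => ((fun x => (gaussianPDFReal 0 v x).toNNReal) x : ℝ≥0∞) := rfl
  rw [hd, integral_withDensity_eq_integral_smul
      ((measurable_gaussianPDFReal 0 v).real_toNNReal)]
  have hpt : ∀ y : ℝ, ((gaussianPDFReal 0 v y).toNNReal : ℝ≥0)
        • Real.sinh (σ * y + b)
      = (Real.exp b * Real.exp (σ ^ 2 * v / 2) / 2) * gaussianPDFReal (σ * v) v y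
        - (Real.exp (-b) * Real.exp (σ ^ 2 * v / 2) / 2)
            * gaussianPDFReal (-σ * v) v y := by
    intro y
    have h1 := gauss_exp_mul_pdf v hv σ y
    have h2 := gauss_exp_mul_pdf v hv (-σ) y
    rw [neg_pow, neg_mul] at h2
    have h2' : Real.exp (-σ * y) * gaussianPDFReal 0 v y
        = Real.exp (σ ^ 2 * v / 2) * gaussianPDFReal (-σ * v) v y := by
      simpa using h2
    rw [NNReal.smul_def, Real.coe_toNNReal _ (gaussianPDFReal_nonneg _ _ _),
      Real.sinh_eq, Real.exp_add, neg_add, Real.exp_add, smul_eq_mul,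
      show Real.exp (-(σ * y)) = Real.exp (-σ * y) by rw [neg_mul]]
    linear_combination (Real.exp b / 2) * h1 - (Real.exp (-b) / 2) * h2'
  simp only [hpt]
  rw [integral_sub ((integrable_gaussianPDFReal _ _).const_mul _)
      ((integrable_gaussianPDFReal _ _).const_mul _),
    integral_const_mul, integral_const_mul,
    integral_gaussianPDFReal_eq_one _ hvne, integral_gaussianPDFReal_eq_one _ hvne,
    Real.sinh_eq]
  ring

/-- One-step conditional mean of the Lie–Trotter scheme for the Student diffusion:
for `ξ ~ N(0,h)` and `c ∈ ℝ`, `E[sinh(√(2θa) ξ + arcsinh c)] = c e^{θah}`;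
consequently, with `θ̃ = (1+a)θ` and `μ̃ = μ/(1+a)`, the LT scheme started at `x ∈ ℝ`
has mean `e^{−θh} x + μ̃(e^{θah} − e^{−θh})`. -/
theorem student_LT_one_step_mean
    (θ a h c μ x : ℝ) (hθ : 0 < θ) (ha : 0 < a) (hh : 0 < h) :
    (∫ z, Real.sinh (Real.sqrt (2 * θ * a) * z + Real.arsinh c)
          ∂(gaussianReal 0 h.toNNReal))
        = c * Real.exp (θ * a * h)
      ∧ (∫ z, Real.sinh (Real.sqrt (2 * θ * a) * z
              + Real.arsinh (μ / (1 + a)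
                  + Real.exp (-((1 + a) * θ) * h) * (x - μ / (1 + a))))
            ∂(gaussianReal 0 h.toNNReal))
          = Real.exp (-θ * h) * x
            + (μ / (1 + a)) * (Real.exp (θ * a * h) - Real.exp (-θ * h)) := by
  have hvcoe : ((h.toNNReal : NNReal) : ℝ) = h := Real.coe_toNNReal h hh.le
  have hvpos : 0 < ((h.toNNReal : NNReal) : ℝ) := by rw [hvcoe]; exact hh
  have hsq : Real.sqrt (2 * θ * a) ^ 2 = 2 * θ * a :=
    Real.sq_sqrt (by positivity)
  have key : ∀ b : ℝ,
      (∫ z, Real.sinh (Real.sqrt (2 * θ * a) * z + b) ∂(gaussianReal 0 h.toNNReal))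
        = Real.sinh b * Real.exp (θ * a * h) := by
    intro b
    rw [gauss_sinh_integral _ hvpos, hsq, hvcoe]
    ring_nf
  constructor
  · rw [key, Real.sinh_arsinh]
  · rw [key, Real.sinh_arsinh]
    have hE : Real.exp (-((1 + a) * θ) * h) * Real.exp (θ * a * h)
        = Real.exp (-θ * h) := by
      rw [← Real.exp_add]; congr 1; ring
    linear_combination (x - μ / (1 + a)) * hE
end
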